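/- arXiv:2101.07488 — 6 statements merged into one kernel-verified Lean document; each statement's English description precedes it below -/
import Mathlib

section
/- Strong Law of Large Numbers for extended Pólya urns: under assumptions (A1)–(A4), the ball-count vector satisfies (ns)^{-1} C_n → v_1 almost surely, and also (ns)^{-1} C_n → v_1 in r-th mean for every r > 0, where s is the principal eigenvalue of the replacement matrix R and v_1 is its stochastic principal left eigenvector. -/
open MeasureTheory ProbabilityTheory Filter Matrix
open scoped Topology NNReal

noncomputable section

/-- An extended Pólya urn process with `d` colours and replacement matrix `R`, adapted to the
filtration `F` on the probability space `(Ω, μ)`.  `C n` is the (row) vector of ball counts at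
time `n`, `χ (n+1)` is the indicator (canonical basis) row vector of the colour drawn at time
`n+1`, the initial configuration `C 0 = C0` is deterministic with positive total mass, the
dynamics are `C (n+1) = C n + χ (n+1) ⬝ R`, the conditional probability of drawing colour `i`
at time `n+1` given `F n` equals `C n i / t n` where `t n = ∑ i, C n i`, and the urn is
tenable: almost surely all coordinates stay nonnegative (assumption (A1)). -/
structure UrnProcess (d : ℕ) {Ω : Type*} [mΩ : MeasurableSpace Ω]
    (μ : Measure Ω) (F : Filtration ℕ mΩ) (R : Matrix (Fin d) (Fin d) ℝ) where
  C : ℕ → Ω → Fin d → ℝ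
  χ : ℕ → Ω → Fin d → ℝ
  adapted : MeasureTheory.Adapted F C
  chi_meas : ∀ n : ℕ, StronglyMeasurable[F (n + 1)] (χ (n + 1))
  C0 : Fin d → ℝ
  C0_det : ∀ ω, C 0 ω = C0
  t0_pos : 0 < ∑ i, C0 i
  dynamics : ∀ n ω, C (n + 1) ω = C n ω + Matrix.vecMul (χ (n + 1) ω) R
  chi_basis : ∀ n ω, ∃ i : Fin d, χ (n + 1) ω = Pi.single i 1
  chi_cond : ∀ (n : ℕ) (i : Fin d),
    μ[Set.indicator {ω | χ (n + 1) ω = Pi.single i 1} (fun _ => (1 : ℝ)) | F n]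
      =ᵐ[μ] fun ω => C n ω i / ∑ j, C n ω j
  tenable : ∀ᵐ ω ∂μ, ∀ n i, 0 ≤ C n ω i

/-- The spectral assumptions (A2)–(A4) on the replacement matrix `R`: `R` is diagonalisable
over ℝ by an invertible matrix `U` (with inverse `V`) as `V * R * U = diagonal lam` with
real eigenvalues `lam 0 ≥ lam 1 ≥ …`; the principal eigenvalue `s = lam 0` is positive and
`s > 2 λ` for every other eigenvalue λ (A2, "small"); the first column of `U` is the all-ones
vector `e⊤` (so `R e⊤ = s e⊤`), and the first row `v₁` of `V = U⁻¹` — the principal left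
eigenvector — is a stochastic vector (A3, "strictly balanced"). -/
structure UrnSpectral (d : ℕ) [NeZero d] (R : Matrix (Fin d) (Fin d) ℝ) where
  U : Matrix (Fin d) (Fin d) ℝ
  V : Matrix (Fin d) (Fin d) ℝ
  UV : U * V = 1
  VU : V * U = 1
  lam : Fin d → ℝ
  diag : R * U = U * Matrix.diagonal lam
  lam_anti : Antitone lam
  s_pos : 0 < lam 0
  small : ∀ j : Fin d, j ≠ 0 → 2 * lam j < lam 0
  U_col_one : ∀ i : Fin d, U i 0 = 1
  v1_nonneg : ∀ i : Fin d, 0 ≤ V 0 i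
  v1_sum : ∑ i, V 0 i = 1

section Aux

variable {d : ℕ} [NeZero d] {Ω : Type*} [mΩ : MeasurableSpace Ω] {μ : Measure Ω}
  [IsProbabilityMeasure μ] {F : Filtration ℕ mΩ} {R : Matrix (Fin d) (Fin d) ℝ}
  (urn : UrnProcess d μ F R) (spec : UrnSpectral d R)

/-- Projection of the count vector on the `j`-th right eigenvector. -/
def urnX (j : Fin d) (n : ℕ) (ω : Ω) : ℝ := ∑ i, urn.C n ω i * spec.U i j

/-- The deterministic total mass. -/
def urnT (n : ℕ) : ℝ := ∑ i, urn.C0 i + n * spec.lam 0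

lemma row_sum_R (i : Fin d) : ∑ k, R i k = spec.lam 0 := by
  have h := congrFun (congrFun spec.diag i) 0
  simp only [Matrix.mul_apply, Matrix.diagonal_apply] at h
  have h2 : ∑ k, R i k * spec.U k 0 = ∑ k, R i k := by
    refine Finset.sum_congr rfl fun k _ => by rw [spec.U_col_one k, mul_one]
  rw [h2] at h
  rw [h]
  rw [Finset.sum_eq_single 0]
  · simp [spec.U_col_one i]
  · intro b _ hb; simp [hb]
  · simp

lemma chi_sum (n : ℕ) (ω : Ω) : ∑ i, urn.χ (n + 1) ω i = 1 := by
  obtain ⟨i, hi⟩ := urn.chi_basis n ω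
  rw [hi]
  simp

lemma sum_C (n : ℕ) (ω : Ω) : ∑ i, urn.C n ω i = urnT urn spec n := by
  induction n with
  | zero => simp [urnT, urn.C0_det ω]
  | succ n ih =>
      have h := urn.dynamics n ω
      have : ∑ i, urn.C (n+1) ω i = ∑ i, urn.C n ω i + ∑ i, Matrix.vecMul (urn.χ (n+1) ω) R i := by
        rw [h]; simp [Finset.sum_add_distrib]
      rw [this, ih]
      have hv : ∑ i, Matrix.vecMul (urn.χ (n+1) ω) R i = spec.lam 0 := by
        simp only [Matrix.vecMul, dotProduct]
        rw [Finset.sum_comm]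
        calc ∑ k, ∑ i, urn.χ (n+1) ω k * R k i
            = ∑ k, urn.χ (n+1) ω k * spec.lam 0 := by
              refine Finset.sum_congr rfl fun k _ => ?_
              rw [← Finset.mul_sum, row_sum_R spec k]
          _ = spec.lam 0 := by rw [← Finset.sum_mul, chi_sum urn n ω, one_mul]
      rw [hv, urnT, urnT]
      push_cast
      ring

lemma urnT_pos (n : ℕ) : 0 < urnT urn spec n := by
  have := urn.t0_pos
  have h0 : (0:ℝ) ≤ n * spec.lam 0 :=
    mul_nonneg (Nat.cast_nonneg n) spec.s_pos.le
  unfold urnT; linarith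

lemma urnX_succ (j : Fin d) (n : ℕ) (ω : Ω) :
    urnX urn spec j (n+1) ω
      = urnX urn spec j n ω + spec.lam j * ∑ i, urn.χ (n+1) ω i * spec.U i j := by
  unfold urnX
  rw [urn.dynamics n ω]
  simp only [Pi.add_apply, add_mul, Finset.sum_add_distrib]
  congr 1
  have : ∑ i, Matrix.vecMul (urn.χ (n+1) ω) R i * spec.U i j
      = Matrix.vecMul (urn.χ (n+1) ω) (R * spec.U) j := by
    rw [← Matrix.vecMul_vecMul]
    simp [Matrix.vecMul, dotProduct]
  rw [this, spec.diag, ← Matrix.vecMul_vecMul, Matrix.vecMul_diagonal]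
  simp only [Matrix.vecMul, dotProduct]
  exact mul_comm _ _

lemma chi_dot_bound (j : Fin d) (n : ℕ) (ω : Ω) :
    |∑ i, urn.χ (n+1) ω i * spec.U i j| ≤ ∑ i, |spec.U i j| := by
  obtain ⟨i0, hi0⟩ := urn.chi_basis n ω
  rw [hi0]
  have : ∑ i, Pi.single (M := fun _ => ℝ) i0 1 i * spec.U i j = spec.U i0 j := by
    rw [Finset.sum_eq_single i0] <;> simp +contextual [Pi.single_apply]
  rw [this]
  exact Finset.single_le_sum (f := fun i => |spec.U i j|) (fun i _ => abs_nonneg _)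
    (Finset.mem_univ i0)


/-- Deterministic bound on increments. -/
lemma urnX_diff_bound (j : Fin d) (a l : ℕ) (ω : Ω) :
    |urnX urn spec j (a + l) ω - urnX urn spec j a ω|
      ≤ l * (|spec.lam j| * ∑ i, |spec.U i j|) := by
  induction l with
  | zero => simp
  | succ l ih =>
      have h := urnX_succ urn spec j (a + l) ω
      have hz := chi_dot_bound urn spec j (a + l) ω
      have : urnX urn spec j (a + (l+1)) ω - urnX urn spec j a ω
          = (urnX urn spec j (a + l) ω - urnX urn spec j a ω)
            + spec.lam j * ∑ i, urn.χ ((a+l)+1) ω i * spec.U i j := by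
        have : a + (l+1) = (a + l) + 1 := by omega
        rw [this, h]; ring
      rw [this]
      calc |_ + _| ≤ |urnX urn spec j (a + l) ω - urnX urn spec j a ω|
            + |spec.lam j * ∑ i, urn.χ ((a+l)+1) ω i * spec.U i j| := abs_add_le _ _
        _ ≤ l * (|spec.lam j| * ∑ i, |spec.U i j|) + |spec.lam j| * ∑ i, |spec.U i j| := by
            refine add_le_add ih ?_
            rw [abs_mul]
            exact mul_le_mul_of_nonneg_left hz (abs_nonneg _)
        _ = (l+1 : ℕ) * (|spec.lam j| * ∑ i, |spec.U i j|) := by push_cast; ring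

lemma urnX_abs_bound (j : Fin d) (n : ℕ) (ω : Ω) :
    |urnX urn spec j n ω|
      ≤ |∑ i, urn.C0 i * spec.U i j| + n * (|spec.lam j| * ∑ i, |spec.U i j|) := by
  have h0 : urnX urn spec j 0 ω = ∑ i, urn.C0 i * spec.U i j := by
    unfold urnX; rw [urn.C0_det ω]
  have := urnX_diff_bound urn spec j 0 n ω
  rw [zero_add, h0] at this
  calc |urnX urn spec j n ω|
      = |(urnX urn spec j n ω - ∑ i, urn.C0 i * spec.U i j) + ∑ i, urn.C0 i * spec.U i j| := by
        ring_nf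
    _ ≤ |urnX urn spec j n ω - ∑ i, urn.C0 i * spec.U i j| + |∑ i, urn.C0 i * spec.U i j| :=
        abs_add_le _ _
    _ ≤ _ := by linarith

lemma C_apply_meas (n : ℕ) (i : Fin d) :
    Measurable[F n] (fun ω => urn.C n ω i) :=
  (measurable_pi_apply i).comp (urn.adapted n)

lemma urnX_meas (j : Fin d) (n : ℕ) : Measurable[F n] (urnX urn spec j n) := by
  unfold urnX
  exact Finset.measurable_sum _ fun i _ =>
    Measurable.mul_const (C_apply_meas (μ := μ) urn n i) _

lemma urnX_meas' (j : Fin d) (n : ℕ) : Measurable (urnX urn spec j n) :=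
  (urnX_meas urn spec j n).mono (F.le n) le_rfl

lemma urnX_sm (j : Fin d) (n : ℕ) : StronglyMeasurable[F n] (urnX urn spec j n) :=
  (urnX_meas urn spec j n).stronglyMeasurable

lemma chi_apply_meas (n : ℕ) (i : Fin d) :
    Measurable (fun ω => urn.χ (n+1) ω i) :=
  ((measurable_pi_apply i).comp (urn.chi_meas n).measurable).mono (F.le (n+1)) le_rfl

lemma chi_apply_mem (n : ℕ) (ω : Ω) (i : Fin d) :
    urn.χ (n+1) ω i = 0 ∨ urn.χ (n+1) ω i = 1 := by
  obtain ⟨i0, hi0⟩ := urn.chi_basis n ω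
  rw [hi0]
  rcases eq_or_ne i i0 with h | h
  · right; simp [h, Pi.single_apply]
  · left; simp [Pi.single_apply, h]

lemma integrable_of_bound {f : Ω → ℝ} (hf : AEStronglyMeasurable f μ) (c : ℝ)
    (h : ∀ ω, |f ω| ≤ c) : Integrable f μ :=
  ⟨hf, HasFiniteIntegral.of_bounded (C := c) (ae_of_all _ fun ω => by
    rw [Real.norm_eq_abs]; exact h ω)⟩


lemma C_abs_bound (n : ℕ) (ω : Ω) (i : Fin d) :
    |urn.C n ω i| ≤ |urn.C0 i| + n * ∑ k, |R k i| := by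
  induction n with
  | zero => simp [urn.C0_det ω]
  | succ n ih =>
      rw [urn.dynamics n ω]
      obtain ⟨i0, hi0⟩ := urn.chi_basis n ω
      have hv : Matrix.vecMul (urn.χ (n+1) ω) R i = R i0 i := by
        rw [hi0]
        simp only [Matrix.vecMul, dotProduct]
        rw [Finset.sum_eq_single i0] <;> simp +contextual [Pi.single_apply]
      have hb : |Matrix.vecMul (urn.χ (n+1) ω) R i| ≤ ∑ k, |R k i| := by
        rw [hv]
        exact Finset.single_le_sum (f := fun k => |R k i|) (fun k _ => abs_nonneg _)
          (Finset.mem_univ i0)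
      calc |(urn.C n ω + Matrix.vecMul (urn.χ (n+1) ω) R) i|
          ≤ |urn.C n ω i| + |Matrix.vecMul (urn.χ (n+1) ω) R i| := abs_add_le _ _
        _ ≤ (|urn.C0 i| + n * ∑ k, |R k i|) + ∑ k, |R k i| := add_le_add ih hb
        _ = |urn.C0 i| + (n+1 : ℕ) * ∑ k, |R k i| := by push_cast; ring

lemma integral_X_mul_chi (j i : Fin d) (n : ℕ) :
    ∫ ω, urnX urn spec j n ω * urn.χ (n+1) ω i ∂μ
      = ∫ ω, urnX urn spec j n ω * (urn.C n ω i / urnT urn spec n) ∂μ := by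
  set A := {ω | urn.χ (n + 1) ω = Pi.single i 1} with hA_def
  set g : Ω → ℝ := Set.indicator A (fun _ => (1:ℝ)) with hg_def
  have hAset : A = (fun ω => urn.χ (n+1) ω i) ⁻¹' {1} := by
    ext ω
    simp only [hA_def, Set.mem_setOf_eq, Set.mem_preimage, Set.mem_singleton_iff]
    constructor
    · intro h; rw [h]; simp
    · intro h
      obtain ⟨i0, hi0⟩ := urn.chi_basis n ω
      rcases eq_or_ne i0 i with rfl | hne
      · exact hi0
      · exfalso
        rw [hi0] at h
        simp [Pi.single_apply, Ne.symm hne] at h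
  have hA : MeasurableSet A := by
    rw [hAset]
    exact chi_apply_meas urn n i (measurableSet_singleton 1)
  have hchi_eq : ∀ ω, urn.χ (n+1) ω i = g ω := by
    intro ω
    by_cases h : ω ∈ A
    · rw [hg_def, Set.indicator_of_mem h]
      have := hAset ▸ h
      exact this
    · rw [hg_def, Set.indicator_of_notMem h]
      rcases chi_apply_mem urn n ω i with h0 | h1
      · exact h0
      · exact absurd (hAset ▸ (Set.mem_preimage.mpr (Set.mem_singleton_iff.mpr h1) :
          ω ∈ (fun ω => urn.χ (n+1) ω i) ⁻¹' {1})) h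
  set f := urnX urn spec j n with hf_def
  set cB := |∑ i, urn.C0 i * spec.U i j| + n * (|spec.lam j| * ∑ i, |spec.U i j|) with hcB
  have hf_bound : ∀ ω, |f ω| ≤ cB := fun ω => urnX_abs_bound urn spec j n ω
  have hg_meas : Measurable g := Measurable.indicator measurable_const hA
  have hg_bound : ∀ ω, |g ω| ≤ 1 := by
    intro ω
    by_cases h : ω ∈ A
    · rw [hg_def, Set.indicator_of_mem h]; simp
    · rw [hg_def, Set.indicator_of_notMem h]; simp
  have hg_int : Integrable g μ := integrable_of_bound hg_meas.aestronglyMeasurable 1 hg_bound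
  have hfg_int : Integrable (f * g) μ := by
    refine integrable_of_bound ((urnX_meas' urn spec j n).mul hg_meas).aestronglyMeasurable
      (cB * 1) fun ω => ?_
    rw [Pi.mul_apply, abs_mul]
    exact mul_le_mul (hf_bound ω) (hg_bound ω) (abs_nonneg _)
        ((abs_nonneg _).trans (hf_bound ω))
  have h1 : μ[f * g | F n] =ᵐ[μ] f * μ[g | F n] :=
    condExp_mul_of_stronglyMeasurable_left (urnX_sm urn spec j n) hfg_int hg_int
  have h2 : μ[g | F n] =ᵐ[μ] fun ω => urn.C n ω i / ∑ k, urn.C n ω k := urn.chi_cond n i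
  calc ∫ ω, f ω * urn.χ (n+1) ω i ∂μ
      = ∫ ω, (f * g) ω ∂μ := by
        refine integral_congr_ae (ae_of_all _ fun ω => ?_)
        show f ω * urn.χ (n+1) ω i = (f * g) ω
        rw [Pi.mul_apply, hchi_eq ω]
    _ = ∫ ω, (μ[f * g | F n]) ω ∂μ := (integral_condExp (F.le n) (f := f * g)).symm
    _ = ∫ ω, f ω * (μ[g | F n]) ω ∂μ := by
        refine integral_congr_ae (h1.mono fun ω h => ?_)
        show (μ[f * g | F n]) ω = f ω * (μ[g | F n]) ω
        rw [h, Pi.mul_apply]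
    _ = ∫ ω, f ω * (urn.C n ω i / urnT urn spec n) ∂μ := by
        refine integral_congr_ae (h2.mono fun ω h => ?_)
        show f ω * (μ[g | F n]) ω = f ω * (urn.C n ω i / urnT urn spec n)
        rw [h]
        simp only []
        rw [sum_C urn spec n ω]


lemma Z_meas (j : Fin d) (n : ℕ) :
    Measurable (fun ω => ∑ i, urn.χ (n+1) ω i * spec.U i j) :=
  Finset.measurable_sum _ fun i _ => (chi_apply_meas urn n i).mul_const _

lemma Xsq_int (j : Fin d) (n : ℕ) :
    Integrable (fun ω => (urnX urn spec j n ω)^2) μ := by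
  refine integrable_of_bound ((urnX_meas' urn spec j n).pow_const 2).aestronglyMeasurable
    ((|∑ i, urn.C0 i * spec.U i j| + n * (|spec.lam j| * ∑ i, |spec.U i j|))^2) fun ω => ?_
  rw [abs_pow]
  exact pow_le_pow_left₀ (abs_nonneg _) (urnX_abs_bound urn spec j n ω) 2

lemma integral_X_mul_Z (j : Fin d) (n : ℕ) :
    ∫ ω, urnX urn spec j n ω * (∑ i, urn.χ (n+1) ω i * spec.U i j) ∂μ
      = (urnT urn spec n)⁻¹ * ∫ ω, (urnX urn spec j n ω)^2 ∂μ := by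
  set f := urnX urn spec j n with hf_def
  set t := urnT urn spec n with ht_def
  have htpos : 0 < t := urnT_pos urn spec n
  set cB := |∑ i, urn.C0 i * spec.U i j| + n * (|spec.lam j| * ∑ i, |spec.U i j|) with hcB
  have hf_bound : ∀ ω, |f ω| ≤ cB := fun ω => urnX_abs_bound urn spec j n ω
  have hint1 : ∀ i : Fin d, Integrable (fun ω => f ω * urn.χ (n+1) ω i * spec.U i j) μ := by
    intro i
    refine integrable_of_bound
      (((urnX_meas' urn spec j n).mul (chi_apply_meas urn n i)).mul_const _).aestronglyMeasurable
      (cB * 1 * |spec.U i j|) fun ω => ?_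
    rw [abs_mul, abs_mul]
    refine mul_le_mul_of_nonneg_right ?_ (abs_nonneg _)
    refine mul_le_mul (hf_bound ω) ?_ (abs_nonneg _) ((abs_nonneg _).trans (hf_bound ω))
    rcases chi_apply_mem urn n ω i with h | h <;> rw [h] <;> simp
  have hint2 : ∀ i : Fin d, Integrable (fun ω => f ω * (urn.C n ω i / t) * spec.U i j) μ := by
    intro i
    refine integrable_of_bound
      ((((urnX_meas' urn spec j n).mul
        (((C_apply_meas (μ := μ) urn n i).mono (F.le n) le_rfl).div_const _)).mul_const
          _)).aestronglyMeasurable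
      (cB * ((|urn.C0 i| + n * ∑ k, |R k i|) / t) * |spec.U i j|) fun ω => ?_
    rw [abs_mul, abs_mul]
    refine mul_le_mul_of_nonneg_right ?_ (abs_nonneg _)
    refine mul_le_mul (hf_bound ω) ?_ (abs_nonneg _) ((abs_nonneg _).trans (hf_bound ω))
    rw [abs_div, abs_of_pos htpos]
    exact (div_le_div_iff_of_pos_right htpos).mpr (C_abs_bound urn n ω i)
  calc ∫ ω, f ω * (∑ i, urn.χ (n+1) ω i * spec.U i j) ∂μ
      = ∫ ω, ∑ i, f ω * urn.χ (n+1) ω i * spec.U i j ∂μ := by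
        refine integral_congr_ae (ae_of_all _ fun ω => ?_)
        show f ω * (∑ i, urn.χ (n+1) ω i * spec.U i j) = ∑ i, f ω * urn.χ (n+1) ω i * spec.U i j
        rw [Finset.mul_sum]
        exact Finset.sum_congr rfl fun i _ => by ring
    _ = ∑ i, ∫ ω, f ω * urn.χ (n+1) ω i * spec.U i j ∂μ := integral_finset_sum _ fun i _ => hint1 i
    _ = ∑ i, (∫ ω, f ω * urn.χ (n+1) ω i ∂μ) * spec.U i j := by
        exact Finset.sum_congr rfl fun i _ => integral_mul_const _ _
    _ = ∑ i, (∫ ω, f ω * (urn.C n ω i / t) ∂μ) * spec.U i j := by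
        exact Finset.sum_congr rfl fun i _ => by rw [integral_X_mul_chi urn spec j i n]
    _ = ∑ i, ∫ ω, f ω * (urn.C n ω i / t) * spec.U i j ∂μ := by
        exact Finset.sum_congr rfl fun i _ => (integral_mul_const _ _).symm
    _ = ∫ ω, ∑ i, f ω * (urn.C n ω i / t) * spec.U i j ∂μ :=
        (integral_finset_sum _ fun i _ => hint2 i).symm
    _ = ∫ ω, t⁻¹ * (f ω)^2 ∂μ := by
        refine integral_congr_ae (ae_of_all _ fun ω => ?_)
        have : ∑ i, f ω * (urn.C n ω i / t) * spec.U i j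
            = (f ω * t⁻¹) * ∑ i, urn.C n ω i * spec.U i j := by
          rw [Finset.mul_sum]
          exact Finset.sum_congr rfl fun i _ => by rw [div_eq_mul_inv]; ring
        show ∑ i, f ω * (urn.C n ω i / t) * spec.U i j = t⁻¹ * (f ω)^2
        rw [this]
        have hfx : ∑ i, urn.C n ω i * spec.U i j = f ω := rfl
        rw [hfx]; ring
    _ = t⁻¹ * ∫ ω, (f ω)^2 ∂μ := integral_const_mul _ _


lemma XZ_int (j : Fin d) (n : ℕ) :
    Integrable (fun ω => urnX urn spec j n ω * (∑ i, urn.χ (n+1) ω i * spec.U i j)) μ := by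
  refine integrable_of_bound ((urnX_meas' urn spec j n).mul (Z_meas urn spec j n)).aestronglyMeasurable
    ((|∑ i, urn.C0 i * spec.U i j| + n * (|spec.lam j| * ∑ i, |spec.U i j|)) * ∑ i, |spec.U i j|)
    fun ω => ?_
  rw [abs_mul]
  exact mul_le_mul (urnX_abs_bound urn spec j n ω) (chi_dot_bound urn spec j n ω) (abs_nonneg _)
    ((abs_nonneg _).trans (urnX_abs_bound urn spec j n ω))

lemma Zsq_int (j : Fin d) (n : ℕ) :
    Integrable (fun ω => (∑ i, urn.χ (n+1) ω i * spec.U i j)^2) μ := by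
  refine integrable_of_bound ((Z_meas urn spec j n).pow_const 2).aestronglyMeasurable
    ((∑ i, |spec.U i j|)^2) fun ω => ?_
  rw [abs_pow]
  exact pow_le_pow_left₀ (abs_nonneg _) (chi_dot_bound urn spec j n ω) 2

lemma moment_rec (j : Fin d) (n : ℕ) :
    ∫ ω, (urnX urn spec j (n+1) ω)^2 ∂μ
      ≤ (1 + max (2 * spec.lam j) 0 / urnT urn spec n) * ∫ ω, (urnX urn spec j n ω)^2 ∂μ
        + (spec.lam j)^2 * (∑ i, |spec.U i j|)^2 := by
  set t := urnT urn spec n with ht_def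
  have htpos : 0 < t := urnT_pos urn spec n
  set I := ∫ ω, (urnX urn spec j n ω)^2 ∂μ with hI
  have hInn : 0 ≤ I := integral_nonneg fun ω => sq_nonneg _
  have hexp : (fun ω => (urnX urn spec j (n+1) ω)^2)
      = fun ω => (urnX urn spec j n ω)^2
          + ((2 * spec.lam j) * (urnX urn spec j n ω * (∑ i, urn.χ (n+1) ω i * spec.U i j))
            + (spec.lam j)^2 * (∑ i, urn.χ (n+1) ω i * spec.U i j)^2) := by
    funext ω
    rw [urnX_succ urn spec j n ω]
    ring
  have hsplit : ∫ ω, (urnX urn spec j (n+1) ω)^2 ∂μ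
      = I + ((2 * spec.lam j) * ∫ ω, urnX urn spec j n ω * (∑ i, urn.χ (n+1) ω i * spec.U i j) ∂μ
          + (spec.lam j)^2 * ∫ ω, (∑ i, urn.χ (n+1) ω i * spec.U i j)^2 ∂μ) := by
    rw [hexp]
    have i1 : Integrable (fun ω => (urnX urn spec j n ω)^2) μ := Xsq_int urn spec j n
    have i2 : Integrable (fun ω => (2 * spec.lam j)
        * (urnX urn spec j n ω * (∑ i, urn.χ (n+1) ω i * spec.U i j))) μ :=
      (XZ_int urn spec j n).const_mul _
    have i3 : Integrable (fun ω => (spec.lam j)^2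
        * (∑ i, urn.χ (n+1) ω i * spec.U i j)^2) μ :=
      (Zsq_int urn spec j n).const_mul _
    have i23 : Integrable (fun ω => (2 * spec.lam j)
        * (urnX urn spec j n ω * (∑ i, urn.χ (n+1) ω i * spec.U i j))
        + (spec.lam j)^2 * (∑ i, urn.χ (n+1) ω i * spec.U i j)^2) μ := i2.add i3
    rw [integral_add i1 i23, integral_add i2 i3, integral_const_mul, integral_const_mul]
  rw [hsplit, integral_X_mul_Z urn spec j n]
  have h1 : (2 * spec.lam j) * (t⁻¹ * I) ≤ max (2 * spec.lam j) 0 / t * I := by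
    rw [div_eq_mul_inv]
    calc (2 * spec.lam j) * (t⁻¹ * I) ≤ max (2 * spec.lam j) 0 * (t⁻¹ * I) :=
          mul_le_mul_of_nonneg_right (le_max_left _ _)
            (mul_nonneg (inv_nonneg.mpr htpos.le) hInn)
      _ = max (2 * spec.lam j) 0 * t⁻¹ * I := by ring
  have h2 : ∫ ω, (∑ i, urn.χ (n+1) ω i * spec.U i j)^2 ∂μ ≤ (∑ i, |spec.U i j|)^2 := by
    calc ∫ ω, (∑ i, urn.χ (n+1) ω i * spec.U i j)^2 ∂μ
        ≤ ∫ _ω, (∑ i, |spec.U i j|)^2 ∂μ := by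
          refine integral_mono (Zsq_int urn spec j n) (integrable_const _) fun ω => ?_
          calc (∑ i, urn.χ (n+1) ω i * spec.U i j)^2
              = |∑ i, urn.χ (n+1) ω i * spec.U i j|^2 := (sq_abs _).symm
            _ ≤ (∑ i, |spec.U i j|)^2 :=
              pow_le_pow_left₀ (abs_nonneg _) (chi_dot_bound urn spec j n ω) 2
      _ = (∑ i, |spec.U i j|)^2 := by simp
  have h3 : (spec.lam j)^2 * ∫ ω, (∑ i, urn.χ (n+1) ω i * spec.U i j)^2 ∂μ
      ≤ (spec.lam j)^2 * (∑ i, |spec.U i j|)^2 :=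
    mul_le_mul_of_nonneg_left h2 (sq_nonneg _)
  have : (1 + max (2 * spec.lam j) 0 / t) * I = I + max (2 * spec.lam j) 0 / t * I := by ring
  rw [this]
  linarith

/-- The constant in the second-moment bound. -/
def urnK (j : Fin d) : ℝ :=
  max ((∫ ω, (urnX urn spec j 0 ω)^2 ∂μ) / urnT urn spec 0)
    ((spec.lam j)^2 * (∑ i, |spec.U i j|)^2 / (spec.lam 0 - max (2 * spec.lam j) 0))

lemma moment_bound (j : Fin d) (hj : j ≠ 0) (n : ℕ) :
    ∫ ω, (urnX urn spec j n ω)^2 ∂μ ≤ urnK urn spec (μ := μ) j * urnT urn spec n := by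
  set K := urnK urn spec (μ := μ) j with hK
  set B := (spec.lam j)^2 * (∑ i, |spec.U i j|)^2 with hB
  have hBnn : 0 ≤ B := mul_nonneg (sq_nonneg _) (sq_nonneg _)
  set ρ := max (2 * spec.lam j) 0 with hρ
  have hρnn : 0 ≤ ρ := le_max_right _ _
  have hsρ : 0 < spec.lam 0 - ρ := by
    have := spec.small j hj
    have := spec.s_pos
    rw [hρ]
    rcases max_cases (2 * spec.lam j) 0 with ⟨h, _⟩ | ⟨h, _⟩ <;> rw [h] <;> linarith
  have hKB : B ≤ K * (spec.lam 0 - ρ) := by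
    have : B / (spec.lam 0 - ρ) ≤ K := le_max_right _ _
    calc B = B / (spec.lam 0 - ρ) * (spec.lam 0 - ρ) := by field_simp
      _ ≤ K * (spec.lam 0 - ρ) := mul_le_mul_of_nonneg_right this hsρ.le
  have hKnn : 0 ≤ K := le_trans (div_nonneg hBnn hsρ.le) (le_max_right _ _)
  induction n with
  | zero =>
      have ht0 : 0 < urnT urn spec 0 := urnT_pos urn spec 0
      have : (∫ ω, (urnX urn spec j 0 ω)^2 ∂μ) / urnT urn spec 0 ≤ K := le_max_left _ _
      calc ∫ ω, (urnX urn spec j 0 ω)^2 ∂μ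
          = (∫ ω, (urnX urn spec j 0 ω)^2 ∂μ) / urnT urn spec 0 * urnT urn spec 0 := by
            field_simp
        _ ≤ K * urnT urn spec 0 := mul_le_mul_of_nonneg_right this ht0.le
  | succ n ih =>
      have htpos : 0 < urnT urn spec n := urnT_pos urn spec n
      have hrec := moment_rec urn spec j n
      have hcoef : 0 ≤ 1 + ρ / urnT urn spec n := by positivity
      have hTsucc : urnT urn spec (n+1) = urnT urn spec n + spec.lam 0 := by
        unfold urnT; push_cast; ring
      calc ∫ ω, (urnX urn spec j (n+1) ω)^2 ∂μ
          ≤ (1 + ρ / urnT urn spec n) * ∫ ω, (urnX urn spec j n ω)^2 ∂μ + B := hrec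
        _ ≤ (1 + ρ / urnT urn spec n) * (K * urnT urn spec n) + B :=
            add_le_add (mul_le_mul_of_nonneg_left ih hcoef) le_rfl
        _ = K * urnT urn spec n + K * ρ + B := by field_simp
        _ ≤ K * urnT urn spec n + K * ρ + K * (spec.lam 0 - ρ) := by linarith
        _ = K * urnT urn spec (n+1) := by rw [hTsucc]; ring


lemma urnK_nonneg (j : Fin d) : 0 ≤ urnK urn spec (μ := μ) j :=
  le_trans (div_nonneg (integral_nonneg fun ω => sq_nonneg _) (urnT_pos urn spec 0).le)
    (le_max_left _ _)

lemma as_subseq (j : Fin d) (hj : j ≠ 0) :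
    ∀ᵐ ω ∂μ, Tendsto (fun k : ℕ => urnX urn spec j (k^2) ω / (k:ℝ)^2) atTop (𝓝 0) := by
  set K := urnK urn spec (μ := μ) j with hKdef
  have hKnn : 0 ≤ K := urnK_nonneg urn spec j
  set t0 := ∑ i, urn.C0 i with ht0
  have ht0pos : 0 < t0 := urn.t0_pos
  set c := K * (t0 + spec.lam 0) with hc
  have hcnn : 0 ≤ c := mul_nonneg hKnn (by have := spec.s_pos; linarith)
  set Y : ℕ → Ω → ℝ := fun k ω => urnX urn spec j (k^2) ω / (k:ℝ)^2 with hY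
  have hYm : ∀ k, Measurable (Y k) := fun k => (urnX_meas' urn spec j (k^2)).div_const _
  have hYsq_eq : ∀ k, (fun ω => (Y k ω)^2)
      = fun ω => (urnX urn spec j (k^2) ω)^2 * (((k:ℝ)^2)^2)⁻¹ := by
    intro k; funext ω; rw [hY]; rw [div_pow, div_eq_mul_inv]
  have hYsq_int : ∀ k, Integrable (fun ω => (Y k ω)^2) μ := by
    intro k; rw [hYsq_eq k]; exact (Xsq_int urn spec j (k^2)).mul_const _
  have hIbound : ∀ k : ℕ, ∫ ω, (Y k ω)^2 ∂μ ≤ c * ((k:ℝ)^2)⁻¹ := by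
    intro k
    rw [hYsq_eq k, integral_mul_const]
    rcases Nat.eq_zero_or_pos k with rfl | hk
    · simp
    · have hk1 : (1:ℝ) ≤ (k:ℝ) := by exact_mod_cast hk
      have hkpos : (0:ℝ) < (k:ℝ) := by linarith
      have hmb := moment_bound urn spec j hj (k^2)
      have hT : urnT urn spec (k^2) ≤ (t0 + spec.lam 0) * (k:ℝ)^2 := by
        unfold urnT
        push_cast
        have hk2 : (1:ℝ) ≤ (k:ℝ)^2 := by nlinarith
        have h1 : t0 ≤ t0 * (k:ℝ)^2 := le_mul_of_one_le_right ht0pos.le hk2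
        nlinarith [spec.s_pos]
      have h2 : ∫ ω, (urnX urn spec j (k^2) ω)^2 ∂μ ≤ c * (k:ℝ)^2 := by
        calc ∫ ω, (urnX urn spec j (k^2) ω)^2 ∂μ ≤ K * urnT urn spec (k^2) := hmb
          _ ≤ K * ((t0 + spec.lam 0) * (k:ℝ)^2) := mul_le_mul_of_nonneg_left hT hKnn
          _ = c * (k:ℝ)^2 := by rw [hc]; ring
      have hinv : (0:ℝ) < (((k:ℝ)^2)^2)⁻¹ := by positivity
      calc (∫ ω, (urnX urn spec j (k^2) ω)^2 ∂μ) * (((k:ℝ)^2)^2)⁻¹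
          ≤ (c * (k:ℝ)^2) * (((k:ℝ)^2)^2)⁻¹ := mul_le_mul_of_nonneg_right h2 hinv.le
        _ = c * ((k:ℝ)^2)⁻¹ := by field_simp
  set g : ℕ → Ω → ENNReal := fun k ω => ENNReal.ofReal ((Y k ω)^2) with hg
  have hgm : ∀ k, Measurable (g k) := fun k =>
    ENNReal.measurable_ofReal.comp ((hYm k).pow_const 2)
  have hlin : ∀ k, ∫⁻ ω, g k ω ∂μ = ENNReal.ofReal (∫ ω, (Y k ω)^2 ∂μ) := by
    intro k
    rw [← MeasureTheory.ofReal_integral_eq_lintegral_ofReal (hYsq_int k)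
      (ae_of_all _ fun ω => sq_nonneg _)]
  have hsummable : Summable (fun k : ℕ => c * ((k:ℝ)^2)⁻¹) := by
    have : Summable (fun k : ℕ => 1 / (k:ℝ)^2) :=
      Real.summable_one_div_nat_pow.mpr one_lt_two
    simpa [one_div] using this.mul_left c
  have htsum : (∑' k : ℕ, ∫⁻ ω, g k ω ∂μ) ≠ ⊤ := by
    have hle : (∑' k : ℕ, ∫⁻ ω, g k ω ∂μ)
        ≤ ∑' k : ℕ, ENNReal.ofReal (c * ((k:ℝ)^2)⁻¹) := by
      refine ENNReal.tsum_le_tsum fun k => ?_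
      rw [hlin k]
      exact ENNReal.ofReal_le_ofReal (hIbound k)
    have : ∑' k : ℕ, ENNReal.ofReal (c * ((k:ℝ)^2)⁻¹)
        = ENNReal.ofReal (∑' k : ℕ, c * ((k:ℝ)^2)⁻¹) :=
      (ENNReal.ofReal_tsum_of_nonneg (fun k => by positivity) hsummable).symm
    rw [this] at hle
    exact ne_top_of_le_ne_top ENNReal.ofReal_ne_top hle
  have h_ae : ∀ᵐ ω ∂μ, (∑' k, g k ω) < ⊤ := by
    refine ae_lt_top (Measurable.ennreal_tsum hgm) ?_
    rw [lintegral_tsum fun k => (hgm k).aemeasurable]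
    exact htsum
  filter_upwards [h_ae] with ω hω
  have h0 : Tendsto (fun k => g k ω) atTop (𝓝 0) :=
    ENNReal.tendsto_atTop_zero_of_tsum_ne_top hω.ne
  have h1 : Tendsto (fun k => (Y k ω)^2) atTop (𝓝 0) := by
    have h2 : Tendsto (fun k => (g k ω).toReal) atTop (𝓝 (0:ENNReal).toReal) :=
      (ENNReal.tendsto_toReal (by simp)).comp h0
    simp only [ENNReal.toReal_zero] at h2
    have h3 : (fun k => (g k ω).toReal) = fun k => (Y k ω)^2 := by
      funext k
      rw [hg]
      exact ENNReal.toReal_ofReal (sq_nonneg _)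
    rwa [h3] at h2
  have h4 : Tendsto (fun k => Real.sqrt ((Y k ω)^2)) atTop (𝓝 (Real.sqrt 0)) :=
    (Real.continuous_sqrt.tendsto 0).comp h1
  have h5 : Tendsto (fun k => |Y k ω|) atTop (𝓝 0) := by
    simpa [Real.sqrt_sq_eq_abs, Real.sqrt_zero] using h4
  exact (tendsto_zero_iff_abs_tendsto_zero _).mpr h5


lemma urnX_as (j : Fin d) (hj : j ≠ 0) :
    ∀ᵐ ω ∂μ, Tendsto (fun n : ℕ => urnX urn spec j n ω / n) atTop (𝓝 0) := by
  filter_upwards [as_subseq urn spec j hj] with ω h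
  set c := |spec.lam j| * ∑ i, |spec.U i j| with hc
  have hcnn : 0 ≤ c :=
    mul_nonneg (abs_nonneg _) (Finset.sum_nonneg fun i _ => abs_nonneg _)
  have hsqrt : Tendsto (fun n : ℕ => Nat.sqrt n) atTop atTop := by
    refine tendsto_atTop_atTop.mpr fun b => ⟨b * b, fun n hn => Nat.le_sqrt.mpr hn⟩
  have hterm1 : Tendsto (fun n : ℕ =>
      |urnX urn spec j ((Nat.sqrt n)^2) ω / ((Nat.sqrt n : ℝ))^2|) atTop (𝓝 0) := by
    have := ((tendsto_zero_iff_abs_tendsto_zero _).mp h).comp hsqrt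
    exact this
  have hterm2 : Tendsto (fun n : ℕ => 2 * c / (Nat.sqrt n : ℝ)) atTop (𝓝 0) :=
    (tendsto_const_div_atTop_nhds_zero_nat (2 * c)).comp hsqrt
  have hbound : ∀ᶠ n : ℕ in atTop, |urnX urn spec j n ω / n|
      ≤ |urnX urn spec j ((Nat.sqrt n)^2) ω / ((Nat.sqrt n : ℝ))^2|
        + 2 * c / (Nat.sqrt n : ℝ) := by
    filter_upwards [eventually_ge_atTop 1] with n hn
    set k := Nat.sqrt n with hk
    have hk1 : 1 ≤ k := by
      rw [hk]
      exact Nat.one_le_iff_ne_zero.mpr (fun hz => by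
        have := Nat.sqrt_eq_zero.mp hz; omega)
    have hklow : k^2 ≤ n := by
      rw [hk]; exact Nat.sqrt_le' n
    have hkhigh : n ≤ k^2 + 2*k := by
      have := Nat.lt_succ_sqrt' n
      rw [hk]; nlinarith [Nat.lt_succ_sqrt' n]
    have hdiff := urnX_diff_bound urn spec j (k^2) (n - k^2) ω
    rw [Nat.add_sub_cancel' hklow] at hdiff
    have hXn : |urnX urn spec j n ω| ≤ |urnX urn spec j (k^2) ω| + 2*(k:ℝ)*c := by
      have habs : |urnX urn spec j n ω| ≤
          |urnX urn spec j (k^2) ω| + |urnX urn spec j n ω - urnX urn spec j (k^2) ω| := by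
        have := abs_add_le (urnX urn spec j (k^2) ω)
          (urnX urn spec j n ω - urnX urn spec j (k^2) ω)
        simpa using this
      have hlc : ((n - k^2 : ℕ) : ℝ) * c ≤ 2*(k:ℝ)*c := by
        have hnk : (n - k^2 : ℕ) ≤ 2*k := by omega
        have : ((n - k^2 : ℕ) : ℝ) ≤ 2*(k:ℝ) := by exact_mod_cast hnk
        exact mul_le_mul_of_nonneg_right this hcnn
      have := hdiff.trans hlc
      linarith
    have hkrpos : (0:ℝ) < (k:ℝ) := by exact_mod_cast hk1
    have hk2pos : (0:ℝ) < ((k:ℝ))^2 := by positivity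
    have hnpos : (0:ℝ) < (n:ℝ) := by exact_mod_cast hn
    have hk2len : ((k:ℝ))^2 ≤ (n:ℝ) := by exact_mod_cast hklow
    rw [abs_div, abs_div]
    rw [abs_of_pos hnpos, abs_of_pos hk2pos]
    have hnum_nn : 0 ≤ |urnX urn spec j (k^2) ω| + 2*(k:ℝ)*c := by positivity
    calc |urnX urn spec j n ω| / (n:ℝ)
        ≤ (|urnX urn spec j (k^2) ω| + 2*(k:ℝ)*c) / (n:ℝ) :=
          (div_le_div_iff_of_pos_right hnpos).mpr hXn
      _ ≤ (|urnX urn spec j (k^2) ω| + 2*(k:ℝ)*c) / ((k:ℝ))^2 :=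
          div_le_div_of_nonneg_left hnum_nn hk2pos hk2len
      _ = |urnX urn spec j (k^2) ω| / ((k:ℝ))^2 + 2*c/(k:ℝ) := by
          rw [add_div]
          congr 1
          rw [pow_two]
          field_simp
  have hsum : Tendsto (fun n : ℕ =>
      |urnX urn spec j ((Nat.sqrt n)^2) ω / ((Nat.sqrt n : ℝ))^2|
        + 2 * c / (Nat.sqrt n : ℝ)) atTop (𝓝 0) := by
    simpa using hterm1.add hterm2
  have habs : Tendsto (fun n : ℕ => |urnX urn spec j n ω / n|) atTop (𝓝 0) :=
    squeeze_zero' (Eventually.of_forall fun n => abs_nonneg _) hbound hsum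
  exact (tendsto_zero_iff_abs_tendsto_zero _).mpr habs

end Aux

/-- **Strong Law of Large Numbers for extended Pólya urns** (Theorem 1).  Under assumptions
(A1)–(A4), `(n s)⁻¹ C n → v₁` almost surely, and also in `r`-th mean for every `r > 0`,
where `s = lam 0` is the principal eigenvalue and `v₁ = V 0` is the stochastic principal
left eigenvector of `R`. -/
theorem urn_strong_law_of_large_numbers {d : ℕ} [NeZero d] (hd : 2 ≤ d)
    {Ω : Type*} [mΩ : MeasurableSpace Ω] (μ : Measure Ω) [IsProbabilityMeasure μ]
    (F : Filtration ℕ mΩ) (R : Matrix (Fin d) (Fin d) ℝ)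
    (urn : UrnProcess d μ F R) (spec : UrnSpectral d R) :
    (∀ᵐ ω ∂μ, Tendsto (fun n : ℕ => fun i => urn.C n ω i / (n * spec.lam 0))
        atTop (𝓝 (spec.V 0)))
    ∧ ∀ r : ℝ, 0 < r →
        Tendsto (fun n : ℕ =>
            ∫ ω, ‖(fun i => urn.C n ω i / (n * spec.lam 0)) - spec.V 0‖ ^ r ∂μ)
          atTop (𝓝 0) := by
  have s_pos := spec.s_pos
  have ht0pos := urn.t0_pos
  -- almost sure convergence
  have h_as : ∀ᵐ ω ∂μ, Tendsto (fun n : ℕ => fun i => urn.C n ω i / (n * spec.lam 0))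
      atTop (𝓝 (spec.V 0)) := by
    have hall : ∀ᵐ ω ∂μ, ∀ j : Fin d, j ≠ 0 →
        Tendsto (fun n : ℕ => urnX urn spec j n ω / n) atTop (𝓝 0) := by
      rw [ae_all_iff]
      intro j
      by_cases hj : j = 0
      · exact ae_of_all _ fun ω hne => absurd hj hne
      · exact (urnX_as urn spec j hj).mono fun ω h _ => h
    filter_upwards [hall] with ω hω
    rw [tendsto_pi_nhds]
    intro i
    have hX0 : ∀ n, urnX urn spec 0 n ω = urnT urn spec n := by
      intro n
      rw [← sum_C urn spec n ω]
      exact Finset.sum_congr rfl fun i' _ => by rw [spec.U_col_one i', mul_one]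
    have hrepr : ∀ n, urn.C n ω i = ∑ j, urnX urn spec j n ω * spec.V j i := by
      intro n
      have h1 : ∑ j, urnX urn spec j n ω * spec.V j i
          = ∑ i', urn.C n ω i' * ((spec.U * spec.V) i' i) := by
        unfold urnX
        simp_rw [Finset.sum_mul, Matrix.mul_apply, Finset.mul_sum]
        rw [Finset.sum_comm]
        exact Finset.sum_congr rfl fun i' _ => Finset.sum_congr rfl fun j _ => by ring
      rw [h1, spec.UV]
      simp [Matrix.one_apply]
    have heq : ∀ n : ℕ, urn.C n ω i / (n * spec.lam 0)
        = ∑ j, (urnX urn spec j n ω / n) * (spec.V j i / spec.lam 0) := by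
      intro n
      rw [hrepr n, Finset.sum_div]
      exact Finset.sum_congr rfl fun j _ => by
        rw [div_mul_div_comm]
    have hlim : Tendsto (fun n : ℕ => ∑ j, (urnX urn spec j n ω / n) * (spec.V j i / spec.lam 0))
        atTop (𝓝 (∑ j : Fin d, if j = 0 then spec.V 0 i else 0)) := by
      refine tendsto_finset_sum _ fun j _ => ?_
      by_cases hj : j = 0
      · subst hj
        simp only [if_pos rfl]
        have ht : Tendsto (fun n : ℕ => urnT urn spec n / n) atTop (𝓝 (spec.lam 0)) := by
          have h1 : (fun n : ℕ => urnT urn spec n / n)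
              =ᶠ[atTop] fun n : ℕ => (∑ i', urn.C0 i') / (n:ℝ) + spec.lam 0 := by
            filter_upwards [eventually_ge_atTop 1] with n hn
            have hn0 : (n:ℝ) ≠ 0 := by
              have : (1:ℝ) ≤ (n:ℝ) := by exact_mod_cast hn
              linarith
            unfold urnT
            field_simp
          rw [tendsto_congr' h1]
          have h2 := tendsto_const_div_atTop_nhds_zero_nat (∑ i', urn.C0 i')
          simpa using h2.add tendsto_const_nhds
        have ht2 : Tendsto (fun n : ℕ => urnX urn spec 0 n ω / n) atTop (𝓝 (spec.lam 0)) := by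
          simpa only [hX0] using ht
        have := ht2.mul_const (spec.V 0 i / spec.lam 0)
        have hval : spec.lam 0 * (spec.V 0 i / spec.lam 0) = spec.V 0 i := by
          field_simp
        rwa [hval] at this
      · simp only [if_neg hj]
        have := (hω j hj).mul_const (spec.V j i / spec.lam 0)
        simpa using this
    have hsum : (∑ j : Fin d, if j = 0 then spec.V 0 i else 0) = spec.V 0 i := by
      simp
    rw [hsum] at hlim
    refine hlim.congr fun n => (heq n).symm
  refine ⟨h_as, ?_⟩
  -- convergence of r-th moments by dominated convergence
  intro r hr
  set s := spec.lam 0 with hs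
  set t0 := ∑ i, urn.C0 i with ht0
  set M := t0 / s + 1 + ‖spec.V 0‖ with hM
  have hMnn : 0 ≤ M := by
    have h1 : 0 ≤ t0 / s := div_nonneg ht0pos.le s_pos.le
    have h2 : 0 ≤ ‖spec.V 0‖ := norm_nonneg _
    rw [hM]; linarith
  have hbd : ∀ᵐ ω ∂μ, ∀ n : ℕ,
      ‖(fun i => urn.C n ω i / (n * s)) - spec.V 0‖ ≤ M := by
    filter_upwards [urn.tenable] with ω hten
    intro n
    have hg : ‖(fun i => urn.C n ω i / (n * s))‖ ≤ t0 / s + 1 := by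
      have hnn : (0:ℝ) ≤ t0 / s + 1 := by
        have := div_nonneg ht0pos.le s_pos.le; linarith
      rw [pi_norm_le_iff_of_nonneg hnn]
      intro i
      rcases Nat.eq_zero_or_pos n with rfl | hn
      · simp only [Nat.cast_zero, zero_mul, div_zero, norm_zero]
        exact hnn
      · have hn1 : (1:ℝ) ≤ (n:ℝ) := by exact_mod_cast hn
        have hns : 0 < (n:ℝ) * s := by nlinarith
        have hCnn : 0 ≤ urn.C n ω i := hten n i
        have hCle : urn.C n ω i ≤ t0 + n * s := by
          have hsum := sum_C urn spec n ω
          have h1 : urn.C n ω i ≤ ∑ i', urn.C n ω i' :=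
            Finset.single_le_sum (f := fun i' => urn.C n ω i') (fun i' _ => hten n i')
              (Finset.mem_univ i)
          rw [hsum] at h1
          exact h1
        rw [Real.norm_eq_abs, abs_of_nonneg (div_nonneg hCnn hns.le)]
        calc urn.C n ω i / ((n:ℝ) * s) ≤ (t0 + n * s) / ((n:ℝ) * s) :=
              (div_le_div_iff_of_pos_right hns).mpr hCle
          _ = t0 / ((n:ℝ) * s) + 1 := by field_simp
          _ ≤ t0 / s + 1 := by
              have h2 : s ≤ (n:ℝ) * s := le_mul_of_one_le_left s_pos.le hn1
              have := div_le_div_of_nonneg_left ht0pos.le s_pos h2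
              linarith [div_le_div_of_nonneg_left ht0pos.le s_pos h2]
    calc ‖(fun i => urn.C n ω i / (n * s)) - spec.V 0‖
        ≤ ‖(fun i => urn.C n ω i / (n * s))‖ + ‖spec.V 0‖ := norm_sub_le _ _
      _ ≤ M := by rw [hM]; linarith
  have hmeas : ∀ n : ℕ, AEStronglyMeasurable
      (fun ω => ‖(fun i => urn.C n ω i / (n * s)) - spec.V 0‖ ^ r) μ := by
    intro n
    have hC : Measurable (urn.C n) := (urn.adapted n).mono (F.le n) le_rfl
    have h1 : Measurable (fun ω => (fun i => urn.C n ω i / (n * s))) := by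
      have : (fun ω => (fun i => urn.C n ω i / (n * s)))
          = fun ω => (((n:ℝ) * s)⁻¹) • urn.C n ω := by
        funext ω i
        simp [div_eq_inv_mul]
      rw [this]
      show Measurable ((((n:ℝ) * s)⁻¹) • urn.C n)
      exact hC.const_smul _
    have h2 : Continuous (fun v : Fin d → ℝ => ‖v - spec.V 0‖) :=
      continuous_norm.comp (continuous_sub_right _)
    have h3 : Continuous (fun x : ℝ => x ^ r) := Real.continuous_rpow_const hr.le
    exact ((h3.comp h2).measurable.comp h1).aestronglyMeasurable
  have hbound' : ∀ n : ℕ, ∀ᵐ ω ∂μ,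
      ‖‖(fun i => urn.C n ω i / (n * s)) - spec.V 0‖ ^ r‖ ≤ M ^ r := by
    intro n
    filter_upwards [hbd] with ω hω
    rw [Real.norm_eq_abs, abs_of_nonneg (Real.rpow_nonneg (norm_nonneg _) r)]
    exact Real.rpow_le_rpow (norm_nonneg _) (hω n) hr.le
  have hlim : ∀ᵐ ω ∂μ, Tendsto
      (fun n : ℕ => ‖(fun i => urn.C n ω i / (n * s)) - spec.V 0‖ ^ r) atTop (𝓝 0) := by
    filter_upwards [h_as] with ω hω
    have h1 : Tendsto (fun n : ℕ => (fun i => urn.C n ω i / (n * s)) - spec.V 0)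
        atTop (𝓝 0) := by
      have := hω.sub (tendsto_const_nhds (x := spec.V 0))
      simpa using this
    have h2 : Tendsto (fun n : ℕ => ‖(fun i => urn.C n ω i / (n * s)) - spec.V 0‖)
        atTop (𝓝 0) := by
      have := h1.norm
      simpa using this
    have h3 : ContinuousAt (fun x : ℝ => x ^ r) 0 :=
      Real.continuousAt_rpow_const 0 r (Or.inr hr.le)
    have h4 := (h3.tendsto).comp h2
    simpa [Real.zero_rpow hr.ne', Function.comp_def] using h4
  have hDCT := tendsto_integral_of_dominated_convergence (μ := μ)
    (F := fun n ω => ‖(fun i => urn.C n ω i / (n * s)) - spec.V 0‖ ^ r)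
    (f := fun _ => (0:ℝ)) (bound := fun _ => M ^ r)
    hmeas (integrable_const _) hbound' hlim
  simpa using hDCT
end
end

section
/- Asymptotics of averaged products of the coefficients b_{n,k}: with s > 0, t_0 > 0, real numbers λ_1 = s ≥ λ_2 ≥ … ≥ λ_d with s > 2λ_j for all j ≥ 2, t_ℓ := t_0 + ℓs, b_{n,n}(j) := 1 and b_{n,k}(j) := ∏_{ℓ=k}^{n−1} (1 + λ_j/t_ℓ) for 0 ≤ k < n, one has lim_{n→∞} (1/n) Σ_{k=1}^{n} b_{n,k}(i) b_{n,k}(j) = s/(s − λ_i − λ_j) for all 2 ≤ i ≤ j ≤ d. -/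
open MeasureTheory ProbabilityTheory Filter
open scoped Topology NNReal

noncomputable section

def bCoef (s t0 lamj : ℝ) (n k : ℕ) : ℝ :=
  ∏ ℓ ∈ Finset.Ico k n, (1 + lamj / (t0 + ℓ * s))

namespace BCoefAux

variable (s t0 la lb : ℝ)

/-- product of the two coefficient families -/
def bE (n k : ℕ) : ℝ := bCoef s t0 la n k * bCoef s t0 lb n k

/-- the averaged (unnormalized) sum -/
def bA (n : ℕ) : ℝ := ∑ k ∈ Finset.Icc 1 n, bE s t0 la lb n k

/-- the remainder sum -/
def bR (m : ℕ) : ℝ := ∑ k ∈ Finset.Icc 1 m, bE s t0 la lb (m + 1) (k + 1) / (t0 + k * s)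

lemma bCoef_succ (la' : ℝ) {n k : ℕ} (h : k ≤ n) :
    bCoef s t0 la' (n + 1) k = bCoef s t0 la' n k * (1 + la' / (t0 + n * s)) := by
  simp [bCoef, Finset.prod_Ico_succ_top h]

lemma bCoef_self (la' : ℝ) (n : ℕ) : bCoef s t0 la' n n = 1 := by
  simp [bCoef]

lemma bE_succ {n k : ℕ} (h : k ≤ n) :
    bE s t0 la lb (n + 1) k
      = bE s t0 la lb n k * ((1 + la / (t0 + n * s)) * (1 + lb / (t0 + n * s))) := by
  simp [bE, bCoef_succ _ _ _ h]; ring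

lemma bE_self (n : ℕ) : bE s t0 la lb n n = 1 := by
  simp [bE, bCoef_self]

lemma bA_succ (n : ℕ) :
    bA s t0 la lb (n + 1)
      = bA s t0 la lb n * ((1 + la / (t0 + n * s)) * (1 + lb / (t0 + n * s))) + 1 := by
  rw [bA, Finset.sum_Icc_succ_top (Nat.le_add_left 1 n), bE_self, bA, Finset.sum_mul]
  congr 1
  refine Finset.sum_congr rfl fun k hk => ?_
  exact bE_succ s t0 la lb (Finset.mem_Icc.mp hk).2

lemma bR_succ (m : ℕ) :
    bR s t0 la lb (m + 1)
      = bR s t0 la lb m * ((1 + la / (t0 + (m + 1) * s)) * (1 + lb / (t0 + (m + 1) * s)))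
        + 1 / (t0 + (m + 1) * s) := by
  rw [bR, Finset.sum_Icc_succ_top (Nat.le_add_left 1 m), bE_self, bR, Finset.sum_mul]
  push_cast
  congr 1
  refine Finset.sum_congr rfl fun k hk => ?_
  have hk2 := (Finset.mem_Icc.mp hk).2
  rw [bE_succ s t0 la lb (by omega : k + 1 ≤ m + 1)]
  push_cast
  ring

lemma identity (hs : 0 < s) (ht0 : 0 < t0) (m : ℕ) :
    (s - la - lb) * bA s t0 la lb (m + 1)
      = s + (t0 + m * s) - (t0 + la + lb) * bE s t0 la lb (m + 1) 1
        + la * lb * bR s t0 la lb m := by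
  induction m with
  | zero =>
      have h1 : bA s t0 la lb 1 = 1 := by
        rw [bA, Finset.Icc_self, Finset.sum_singleton, bE_self]
      have h2 : bE s t0 la lb 1 1 = 1 := bE_self s t0 la lb 1
      have h3 : bR s t0 la lb 0 = 0 := by
        rw [bR]
        simp
      rw [h1, h2, h3]
      push_cast
      ring
  | succ m ih =>
      have ht : (0:ℝ) < t0 + (m + 1) * s := by positivity
      rw [bA_succ, bR_succ, bE_succ s t0 la lb (by omega : 1 ≤ m + 1)]
      have hf : (1 + la / (t0 + ((m:ℝ) + 1) * s)) * (1 + lb / (t0 + ((m:ℝ) + 1) * s))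
          * (t0 + ((m:ℝ) + 1) * s)
          = (t0 + ((m:ℝ) + 1) * s) + la + lb + la * lb / (t0 + ((m:ℝ) + 1) * s) := by
        field_simp
        ring
      push_cast
      push_cast at ih
      linear_combination ((1 + la / (t0 + ((m:ℝ) + 1) * s))
        * (1 + lb / (t0 + ((m:ℝ) + 1) * s))) * ih + hf


lemma sum_inv_sq_le (m : ℕ) : ∑ ℓ ∈ Finset.Icc 1 m, (1:ℝ)/(ℓ:ℝ)^2 ≤ 2 - 2/(m+1) := by
  induction m with
  | zero => norm_num
  | succ m ih =>
      rw [Finset.sum_Icc_succ_top (Nat.le_add_left 1 m)]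
      have h1 : (0:ℝ) < (m:ℝ)+1 := by positivity
      have h2 : (0:ℝ) < (m:ℝ)+2 := by positivity
      have key : (1:ℝ)/((m:ℝ)+1)^2 ≤ 2/((m:ℝ)+1) - 2/((m:ℝ)+1+1) := by
        rw [show ((m:ℝ)+1+1) = (m:ℝ)+2 by ring,
          div_sub_div _ _ h1.ne' h2.ne', div_le_div_iff₀ (by positivity) (by positivity)]
        nlinarith
      push_cast
      push_cast at ih
      linarith

lemma sum_inv_le_log (n : ℕ) : ∑ ℓ ∈ Finset.Icc 1 n, ((ℓ:ℝ))⁻¹ ≤ 1 + Real.log n := by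
  have h : ∑ ℓ ∈ Finset.Icc 1 n, ((ℓ:ℝ))⁻¹ = ((harmonic n : ℚ) : ℝ) := by
    rw [harmonic_eq_sum_Icc]; push_cast; rfl
  rw [h]
  exact harmonic_le_one_add_log n

lemma prod_le_prod_subset_one_le {s t : Finset ℕ} (h : s ⊆ t) (f : ℕ → ℝ)
    (hf : ∀ i ∈ t, 1 ≤ f i) : ∏ i ∈ s, f i ≤ ∏ i ∈ t, f i := by
  rw [← Finset.prod_sdiff h]
  have h1 : (1:ℝ) ≤ ∏ i ∈ t \ s, f i := by
    rw [← Finset.prod_const_one (s := t \ s)]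
    exact Finset.prod_le_prod (fun i _ => zero_le_one)
      (fun i hi => hf i (Finset.mem_sdiff.mp hi).1)
  have h2 : (0:ℝ) ≤ ∏ i ∈ s, f i :=
    Finset.prod_nonneg fun i hi => le_trans zero_le_one (hf i (h hi))
  nlinarith

lemma abs_bE_le (hs : 0 < s) (ht0 : 0 < t0) :
    ∃ M : ℝ, 1 ≤ M ∧ ∀ n k : ℕ, 1 ≤ n →
      |bE s t0 la lb n k| ≤ M * (n:ℝ) ^ (max ((la+lb)/s) 0) := by
  set β := max ((la+lb)/s) 0 with hβdef
  have hβ0 : 0 ≤ β := le_max_right _ _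
  have hβs : la + lb ≤ β * s := by
    calc la + lb = ((la+lb)/s) * s := by field_simp
    _ ≤ β * s := mul_le_mul_of_nonneg_right (le_max_left _ _) hs.le
  set c := |la*lb|/s^2 with hcdef
  have hc0 : 0 ≤ c := by positivity
  set L : ℕ := max 1 ⌈(2*(|la|+|lb|)+1)/s⌉₊ with hLdef
  have hL1 : 1 ≤ L := le_max_left _ _
  have hL : ∀ ℓ : ℕ, L ≤ ℓ → 2*(|la|+|lb|)+1 ≤ t0 + ℓ*s := by
    intro ℓ hℓ
    have h1 : ((2*(|la|+|lb|)+1)/s) ≤ (ℓ:ℝ) := by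
      calc ((2*(|la|+|lb|)+1)/s) ≤ (⌈(2*(|la|+|lb|)+1)/s⌉₊ : ℝ) := Nat.le_ceil _
      _ ≤ (L:ℝ) := by exact_mod_cast Nat.cast_le.mpr (le_max_right _ _)
      _ ≤ (ℓ:ℝ) := by exact_mod_cast hℓ
    have h2 : 2*(|la|+|lb|)+1 ≤ (ℓ:ℝ) * s := by
      rw [div_le_iff₀ hs] at h1; linarith
    linarith
  set f : ℕ → ℝ := fun ℓ => (1 + la/(t0+ℓ*s)) * (1 + lb/(t0+ℓ*s)) with hfdef
  set C4 : ℝ := ∏ ℓ ∈ Finset.range L, max 1 |f ℓ| with hC4def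
  have hC4 : 1 ≤ C4 := by
    rw [hC4def]
    simpa using prod_le_prod_subset_one_le (Finset.empty_subset (Finset.range L))
      (fun ℓ => max 1 |f ℓ|) (fun i _ => le_max_left _ _)
  refine ⟨C4 * Real.exp (β + 2*c), ?_, ?_⟩
  · exact one_le_mul_of_one_le_of_one_le hC4 (Real.one_le_exp (by positivity))
  intro n k hn
  have hnR : (0:ℝ) < n := by exact_mod_cast hn
  have hprod : bE s t0 la lb n k = ∏ ℓ ∈ Finset.Ico k n, f ℓ := by
    rw [bE, bCoef, bCoef, ← Finset.prod_mul_distrib]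
  rw [hprod, ← Finset.prod_filter_mul_prod_filter_not (Finset.Ico k n) (· < L), abs_mul]
  have hfirst : |∏ ℓ ∈ (Finset.Ico k n).filter (· < L), f ℓ| ≤ C4 := by
    rw [Finset.abs_prod]
    calc ∏ ℓ ∈ (Finset.Ico k n).filter (· < L), |f ℓ|
        ≤ ∏ ℓ ∈ (Finset.Ico k n).filter (· < L), max 1 |f ℓ| :=
          Finset.prod_le_prod (fun i _ => abs_nonneg _) (fun i _ => le_max_right _ _)
      _ ≤ C4 := by
          rw [hC4def]
          refine prod_le_prod_subset_one_le ?_ _ (fun i _ => le_max_left _ _)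
          intro x hx
          simp only [Finset.mem_filter] at hx
          exact Finset.mem_range.mpr hx.2
  have hsecond : |∏ ℓ ∈ (Finset.Ico k n).filter (fun ℓ => ¬ ℓ < L), f ℓ|
      ≤ Real.exp (β + 2*c) * (n:ℝ) ^ β := by
    set S := (Finset.Ico k n).filter (fun ℓ => ¬ ℓ < L) with hSdef
    have hmem : ∀ ℓ ∈ S, L ≤ ℓ ∧ ℓ < n := by
      intro ℓ hℓ
      simp only [hSdef, Finset.mem_filter, Finset.mem_Ico, not_lt] at hℓ
      exact ⟨hℓ.2, hℓ.1.2⟩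
    have hfle : ∀ ℓ ∈ S, 0 ≤ f ℓ ∧ f ℓ ≤ Real.exp (β/ℓ + c/(ℓ:ℝ)^2) := by
      intro ℓ hℓ
      obtain ⟨hLℓ, hℓn⟩ := hmem ℓ hℓ
      have hℓ1 : 1 ≤ ℓ := le_trans hL1 hLℓ
      have hℓR : (1:ℝ) ≤ (ℓ:ℝ) := by exact_mod_cast hℓ1
      have ht : (0:ℝ) < t0 + ℓ*s := by positivity
      have htbig : 2*(|la|+|lb|)+1 ≤ t0 + ℓ*s := hL ℓ hLℓ
      have htsℓ : (ℓ:ℝ) * s ≤ t0 + ℓ*s := by linarith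
      have hsℓpos : (0:ℝ) < (ℓ:ℝ) * s := by positivity
      have habs : ∀ x : ℝ, |x| * 2 ≤ t0 + ℓ*s → 0 < 1 + x/(t0+ℓ*s) := by
        intro x hx
        have h1 : -x ≤ (t0+ℓ*s) * (1/2) := by
          have := neg_abs_le x; linarith
        have h2 : -(1/2) ≤ x/(t0+ℓ*s) := by
          rw [neg_le, ← neg_div, div_le_iff₀ ht]
          linarith
        linarith
      have hla2 : |la| * 2 ≤ t0 + ℓ*s := by have := abs_nonneg lb; linarith
      have hlb2 : |lb| * 2 ≤ t0 + ℓ*s := by have := abs_nonneg la; linarith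
      have hfpos : 0 < f ℓ := mul_pos (habs la hla2) (habs lb hlb2)
      have hexpand : f ℓ = 1 + ((la+lb)/(t0+ℓ*s) + la*lb/(t0+ℓ*s)^2) := by
        simp only [hfdef]
        field_simp
        ring
      have h3 : (la+lb)/(t0+ℓ*s) ≤ β/ℓ := by
        calc (la+lb)/(t0+ℓ*s) ≤ (β*s)/(t0+ℓ*s) := (div_le_div_iff_of_pos_right ht).mpr hβs
        _ ≤ (β*s)/((ℓ:ℝ)*s) := by
              apply div_le_div_of_nonneg_left (by positivity) hsℓpos htsℓ
        _ = β/ℓ := by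
              rw [mul_comm β s, mul_comm (ℓ:ℝ) s, mul_div_mul_left _ _ hs.ne']
      have h4 : la*lb/(t0+ℓ*s)^2 ≤ c/(ℓ:ℝ)^2 := by
        calc la*lb/(t0+ℓ*s)^2 ≤ |la*lb|/(t0+ℓ*s)^2 :=
              (div_le_div_iff_of_pos_right (by positivity)).mpr (le_abs_self _)
        _ ≤ |la*lb|/((ℓ:ℝ)*s)^2 := by
              apply div_le_div_of_nonneg_left (abs_nonneg _) (by positivity) ?_
              exact pow_le_pow_left₀ hsℓpos.le htsℓ 2
        _ = c/(ℓ:ℝ)^2 := by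
              rw [hcdef, div_div, mul_pow]
              ring_nf
      refine ⟨hfpos.le, ?_⟩
      have := Real.add_one_le_exp (β/ℓ + c/(ℓ:ℝ)^2)
      rw [hexpand]
      linarith
    rw [Finset.abs_prod]
    have hsum : ∑ ℓ ∈ S, (β/ℓ + c/(ℓ:ℝ)^2) ≤ (β + 2*c) + β * Real.log n := by
      have hsub : S ⊆ Finset.Icc 1 n := by
        intro ℓ hℓ
        obtain ⟨h1, h2⟩ := hmem ℓ hℓ
        exact Finset.mem_Icc.mpr ⟨le_trans hL1 h1, le_of_lt h2⟩
      calc ∑ ℓ ∈ S, (β/ℓ + c/(ℓ:ℝ)^2)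
          ≤ ∑ ℓ ∈ Finset.Icc 1 n, (β/ℓ + c/(ℓ:ℝ)^2) := by
            refine Finset.sum_le_sum_of_subset_of_nonneg hsub fun i hi _ => ?_
            have : 1 ≤ i := (Finset.mem_Icc.mp hi).1
            have : (0:ℝ) < i := by exact_mod_cast Nat.lt_of_lt_of_le Nat.zero_lt_one this
            positivity
        _ = β * ∑ ℓ ∈ Finset.Icc 1 n, ((ℓ:ℝ))⁻¹ + c * ∑ ℓ ∈ Finset.Icc 1 n, (1:ℝ)/(ℓ:ℝ)^2 := by
            rw [Finset.mul_sum, Finset.mul_sum, ← Finset.sum_add_distrib]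
            exact Finset.sum_congr rfl fun i _ => by ring
        _ ≤ β * (1 + Real.log n) + c * 2 := by
            refine add_le_add (mul_le_mul_of_nonneg_left (sum_inv_le_log n) hβ0)
              (mul_le_mul_of_nonneg_left ?_ hc0)
            refine le_trans (sum_inv_sq_le n) ?_
            have : (0:ℝ) ≤ 2/((n:ℝ)+1) := by positivity
            linarith
        _ = (β + 2*c) + β * Real.log n := by ring
    calc ∏ ℓ ∈ S, |f ℓ|
        ≤ ∏ ℓ ∈ S, Real.exp (β/ℓ + c/(ℓ:ℝ)^2) := by
          refine Finset.prod_le_prod (fun i _ => abs_nonneg _) fun i hi => ?_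
          obtain ⟨h1, h2⟩ := hfle i hi
          rw [abs_of_nonneg h1]
          exact h2
      _ = Real.exp (∑ ℓ ∈ S, (β/ℓ + c/(ℓ:ℝ)^2)) := (Real.exp_sum _ _).symm
      _ ≤ Real.exp ((β + 2*c) + β * Real.log n) := Real.exp_le_exp.mpr hsum
      _ = Real.exp (β + 2*c) * (n:ℝ) ^ β := by
          rw [Real.exp_add, Real.rpow_def_of_pos hnR, mul_comm (Real.log (n:ℝ)) β]
  calc |∏ ℓ ∈ (Finset.Ico k n).filter (· < L), f ℓ| *
        |∏ ℓ ∈ (Finset.Ico k n).filter (fun ℓ => ¬ ℓ < L), f ℓ|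
      ≤ C4 * (Real.exp (β + 2*c) * (n:ℝ) ^ β) :=
        mul_le_mul hfirst hsecond (abs_nonneg _) (le_trans zero_le_one hC4)
    _ = C4 * Real.exp (β + 2*c) * (n:ℝ) ^ β := by ring

lemma sum_inv_t_le (hs : 0 < s) (ht0 : 0 < t0) (m : ℕ) :
    ∑ k ∈ Finset.Icc 1 m, 1/(t0 + k*s) ≤ (1 + Real.log ((m:ℝ)+1))/s := by
  have step1 : ∑ k ∈ Finset.Icc 1 m, 1/(t0 + k*s) ≤ ∑ k ∈ Finset.Icc 1 m, (1/s) * ((k:ℝ))⁻¹ := by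
    refine Finset.sum_le_sum fun k hk => ?_
    have hk1 : 1 ≤ k := (Finset.mem_Icc.mp hk).1
    have hkR : (1:ℝ) ≤ (k:ℝ) := by exact_mod_cast hk1
    have hks : (0:ℝ) < (k:ℝ) * s := by positivity
    have : 1/(t0 + k*s) ≤ 1/((k:ℝ)*s) := by
      apply one_div_le_one_div_of_le hks
      linarith
    calc 1/(t0 + k*s) ≤ 1/((k:ℝ)*s) := this
      _ = (1/s) * ((k:ℝ))⁻¹ := by
          rw [one_div, mul_inv, one_div, mul_comm]
  calc ∑ k ∈ Finset.Icc 1 m, 1/(t0 + k*s)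
      ≤ ∑ k ∈ Finset.Icc 1 m, (1/s) * ((k:ℝ))⁻¹ := step1
    _ = (1/s) * ∑ k ∈ Finset.Icc 1 m, ((k:ℝ))⁻¹ := by rw [Finset.mul_sum]
    _ ≤ (1/s) * ∑ k ∈ Finset.Icc 1 (m+1), ((k:ℝ))⁻¹ := by
        refine mul_le_mul_of_nonneg_left ?_ (by positivity)
        refine Finset.sum_le_sum_of_subset_of_nonneg ?_ fun i hi _ => ?_
        · exact Finset.Icc_subset_Icc_right (Nat.le_succ m)
        · have h1 : 1 ≤ i := (Finset.mem_Icc.mp hi).1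
          have : (0:ℝ) < (i:ℝ) := by exact_mod_cast Nat.lt_of_lt_of_le Nat.zero_lt_one h1
          positivity
    _ ≤ (1/s) * (1 + Real.log ((m:ℝ)+1)) := by
        refine mul_le_mul_of_nonneg_left ?_ (by positivity)
        have := sum_inv_le_log (m+1)
        push_cast at this
        exact this
    _ = (1 + Real.log ((m:ℝ)+1))/s := by ring

lemma tendsto_rpow_mul_log_div {β : ℝ} (hβ : β < 1) :
    Tendsto (fun x : ℝ => x^β * (1 + Real.log x) / x) atTop (𝓝 0) := by
  have h1 : Tendsto (fun x : ℝ => x^(β-1)) atTop (𝓝 0) := by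
    have := tendsto_rpow_neg_atTop (y := 1-β) (by linarith)
    simpa [neg_sub] using this
  have h2 : Tendsto (fun x : ℝ => Real.log x / x^(1-β)) atTop (𝓝 0) :=
    (isLittleO_log_rpow_atTop (by linarith)).tendsto_div_nhds_zero
  have heq : (fun x : ℝ => x^(β-1) + Real.log x / x^(1-β))
      =ᶠ[atTop] (fun x : ℝ => x^β * (1 + Real.log x) / x) := by
    filter_upwards [eventually_gt_atTop (0:ℝ)] with x hx
    have hxβ : (0:ℝ) < x ^ β := Real.rpow_pos_of_pos hx β
    rw [Real.rpow_sub hx, Real.rpow_sub hx, Real.rpow_one]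
    field_simp
  have := (h1.add h2).congr' heq
  simpa using this

end BCoefAux

/-- **Asymptotics of averaged products of the coefficients `b_{n,k}`** (Lemma 1, Eq. (26)).
If `s > 0`, `t₀ > 0`, and `λ₁ = s ≥ λ₂ ≥ … ≥ λ_d` with `s > 2 λⱼ` for all `j ≥ 2`, then for
all `2 ≤ i ≤ j ≤ d`, `(1/n) ∑_{k=1}^n b_{n,k}(i) b_{n,k}(j) → s / (s − λᵢ − λⱼ)`. -/
theorem bCoef_average_product_limit {d : ℕ} [NeZero d] (hd : 2 ≤ d) (s t0 : ℝ)
    (hs : 0 < s) (ht0 : 0 < t0) (lam : Fin d → ℝ) (hlam0 : lam 0 = s) (hanti : Antitone lam)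
    (hsmall : ∀ j : Fin d, j ≠ 0 → 2 * lam j < s) :
    ∀ i j : Fin d, i ≠ 0 → j ≠ 0 → i ≤ j →
      Tendsto (fun n : ℕ => (1 / n : ℝ) * ∑ k ∈ Finset.Icc 1 n,
          bCoef s t0 (lam i) n k * bCoef s t0 (lam j) n k)
        atTop (𝓝 (s / (s - lam i - lam j))) := by
  intro i j hi hj hij
  set la := lam i with hla
  set lb := lam j with hlb
  have hμ : la + lb < s := by
    have h1 := hsmall i hi
    have h2 := hsmall j hj
    rw [← hla] at h1
    rw [← hlb] at h2
    linarith
  have hsμ : 0 < s - la - lb := by linarith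
  obtain ⟨M, hM1, hM⟩ := BCoefAux.abs_bE_le s t0 la lb hs ht0
  set β := max ((la+lb)/s) 0 with hβdef
  have hβ0 : 0 ≤ β := le_max_right _ _
  have hβ1 : β < 1 := max_lt ((div_lt_one hs).mpr (by linarith)) one_pos
  have hcast : ∀ m : ℕ, ((m+1:ℕ):ℝ) = (m:ℝ)+1 := fun m => by push_cast; ring
  have hmpos : ∀ m : ℕ, (0:ℝ) < (m:ℝ)+1 := fun m => by positivity
  -- limits of natural-number indexed sequences
  have hnat1 : Tendsto (fun m : ℕ => (m:ℝ)+1) atTop atTop :=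
    tendsto_atTop_add_const_right atTop 1 tendsto_natCast_atTop_atTop
  have limit1 : Tendsto (fun m : ℕ => (s + t0 + m*s) * (1/((m:ℝ)+1))) atTop (𝓝 s) := by
    have h : Tendsto (fun m : ℕ => s + t0 * (1/((m:ℝ)+1))) atTop (𝓝 (s + t0 * 0)) :=
      tendsto_const_nhds.add (tendsto_one_div_add_atTop_nhds_zero_nat.const_mul t0)
    rw [mul_zero, add_zero] at h
    refine h.congr fun m => ?_
    have := (hmpos m).ne'
    field_simp
    ring
  have limit2 : Tendsto (fun m : ℕ => BCoefAux.bE s t0 la lb (m+1) 1 * (1/((m:ℝ)+1)))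
      atTop (𝓝 0) := by
    have hg : Tendsto (fun m : ℕ => M * ((m:ℝ)+1)^(β-1)) atTop (𝓝 (M * 0)) := by
      refine Tendsto.const_mul M ?_
      have h := tendsto_rpow_neg_atTop (y := 1-β) (by linarith)
      have := h.comp hnat1
      simpa [neg_sub, Function.comp_def] using this
    rw [mul_zero] at hg
    refine squeeze_zero_norm (fun m => ?_) hg
    have hb := hM (m+1) 1 (Nat.le_add_left 1 m)
    rw [hcast m] at hb
    have h1 : ‖BCoefAux.bE s t0 la lb (m+1) 1 * (1/((m:ℝ)+1))‖
        = |BCoefAux.bE s t0 la lb (m+1) 1| * (1/((m:ℝ)+1)) := by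
      rw [Real.norm_eq_abs, abs_mul, abs_of_pos (by positivity : (0:ℝ) < 1/((m:ℝ)+1))]
    rw [h1]
    calc |BCoefAux.bE s t0 la lb (m+1) 1| * (1/((m:ℝ)+1))
        ≤ M * ((m:ℝ)+1)^β * (1/((m:ℝ)+1)) := by
          refine mul_le_mul_of_nonneg_right hb (by positivity)
      _ = M * ((m:ℝ)+1)^(β-1) := by
          rw [Real.rpow_sub (hmpos m), Real.rpow_one]
          ring
  have limit3 : Tendsto (fun m : ℕ => BCoefAux.bR s t0 la lb m * (1/((m:ℝ)+1)))
      atTop (𝓝 0) := by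
    have hg : Tendsto (fun m : ℕ =>
        (M/s) * (((m:ℝ)+1)^β * (1 + Real.log ((m:ℝ)+1)) / ((m:ℝ)+1))) atTop (𝓝 ((M/s) * 0)) :=
      Tendsto.const_mul (M/s) ((BCoefAux.tendsto_rpow_mul_log_div hβ1).comp hnat1)
    rw [mul_zero] at hg
    refine squeeze_zero_norm (fun m => ?_) hg
    have hR : |BCoefAux.bR s t0 la lb m| ≤ M * ((m:ℝ)+1)^β * ((1 + Real.log ((m:ℝ)+1))/s) := by
      calc |BCoefAux.bR s t0 la lb m|
          ≤ ∑ k ∈ Finset.Icc 1 m, |BCoefAux.bE s t0 la lb (m+1) (k+1) / (t0 + k*s)| :=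
            Finset.abs_sum_le_sum_abs _ _
        _ ≤ ∑ k ∈ Finset.Icc 1 m, (M * ((m:ℝ)+1)^β) * (1/(t0 + k*s)) := by
            refine Finset.sum_le_sum fun k hk => ?_
            have htk : (0:ℝ) < t0 + k*s := by positivity
            rw [abs_div, abs_of_pos htk]
            have hb := hM (m+1) (k+1) (Nat.le_add_left 1 m)
            rw [hcast m] at hb
            calc |BCoefAux.bE s t0 la lb (m+1) (k+1)| / (t0 + k*s)
                ≤ (M * ((m:ℝ)+1)^β) / (t0 + k*s) := by
                  exact (div_le_div_iff_of_pos_right htk).mpr hb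
              _ = (M * ((m:ℝ)+1)^β) * (1/(t0 + k*s)) := by ring
        _ = (M * ((m:ℝ)+1)^β) * ∑ k ∈ Finset.Icc 1 m, 1/(t0 + k*s) := by
            rw [Finset.mul_sum]
        _ ≤ (M * ((m:ℝ)+1)^β) * ((1 + Real.log ((m:ℝ)+1))/s) := by
            refine mul_le_mul_of_nonneg_left (BCoefAux.sum_inv_t_le s t0 hs ht0 m) ?_
            positivity
        _ = M * ((m:ℝ)+1)^β * ((1 + Real.log ((m:ℝ)+1))/s) := by ring
    have h1 : ‖BCoefAux.bR s t0 la lb m * (1/((m:ℝ)+1))‖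
        = |BCoefAux.bR s t0 la lb m| * (1/((m:ℝ)+1)) := by
      rw [Real.norm_eq_abs, abs_mul, abs_of_pos (by positivity : (0:ℝ) < 1/((m:ℝ)+1))]
    rw [h1]
    calc |BCoefAux.bR s t0 la lb m| * (1/((m:ℝ)+1))
        ≤ (M * ((m:ℝ)+1)^β * ((1 + Real.log ((m:ℝ)+1))/s)) * (1/((m:ℝ)+1)) :=
          mul_le_mul_of_nonneg_right hR (by positivity)
      _ = (M/s) * (((m:ℝ)+1)^β * (1 + Real.log ((m:ℝ)+1)) / ((m:ℝ)+1)) := by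
          field_simp
  -- combine
  have hcomb : Tendsto (fun m : ℕ => (1/(s-la-lb)) *
      ((s + t0 + m*s) * (1/((m:ℝ)+1))
        - (t0+la+lb) * (BCoefAux.bE s t0 la lb (m+1) 1 * (1/((m:ℝ)+1)))
        + la*lb * (BCoefAux.bR s t0 la lb m * (1/((m:ℝ)+1)))))
      atTop (𝓝 ((1/(s-la-lb)) * (s - (t0+la+lb) * 0 + la*lb * 0))) :=
    Tendsto.const_mul _ ((limit1.sub (limit2.const_mul (t0+la+lb))).add (limit3.const_mul (la*lb)))
  have hval : (1/(s-la-lb)) * (s - (t0+la+lb) * 0 + la*lb * 0) = s/(s-la-lb) := by ring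
  rw [hval] at hcomb
  rw [← tendsto_add_atTop_iff_nat 1]
  refine hcomb.congr fun m => ?_
  have hbA := BCoefAux.identity s t0 la lb hs ht0 m
  have hA : BCoefAux.bA s t0 la lb (m+1)
      = (s + (t0 + m*s) - (t0+la+lb) * BCoefAux.bE s t0 la lb (m+1) 1
        + la*lb * BCoefAux.bR s t0 la lb m)/(s - la - lb) := by
    rw [eq_div_iff hsμ.ne']
    linarith
  have hsum : (∑ k ∈ Finset.Icc 1 (m+1),
      bCoef s t0 la (m+1) k * bCoef s t0 lb (m+1) k) = BCoefAux.bA s t0 la lb (m+1) := rfl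
  rw [hsum, hA, hcast m]
  have := (hmpos m).ne'
  field_simp
  ring
end
end

section
/- Weighted Toeplitz-type convergence in probability: let s > 0, t_0 > 0 and real numbers λ_1 = s ≥ λ_2 ≥ … ≥ λ_d with s > 2λ_j for all j ≥ 2; set t_ℓ := t_0 + ℓs, b_{n,n}(j) := 1 and b_{n,k}(j) := ∏_{ℓ=k}^{n−1}(1 + λ_j/t_ℓ). If {Z_n} is a sequence of real random variables with Z_n → Z in probability, then for all 2 ≤ i ≤ j ≤ d, (1/n) Σ_{k=1}^{n} b_{n,k}(i) b_{n,k}(j) Z_k → (s/(s − λ_i − λ_j)) Z in probability as n → ∞. -/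
open MeasureTheory ProbabilityTheory Filter
open scoped Topology NNReal

noncomputable section

lemma aux_prod_tendsto_zero (u : ℕ → ℝ) (N : ℕ) (c : ℝ) (hc : 0 < c)
    (h0 : ∀ n, N ≤ n → 0 ≤ u n) (h1 : ∀ n, N ≤ n → u n ≤ 1 - c / (n + 1)) :
    Tendsto (fun n => ∏ ℓ ∈ Finset.Ico N n, u ℓ) atTop (𝓝 0) := by
  have hsum : Tendsto (fun n => ∑ ℓ ∈ Finset.Ico N n, (1 : ℝ) / (ℓ + 1)) atTop atTop := by
    have h := Real.tendsto_sum_range_one_div_nat_succ_atTop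
    have h2 : Tendsto (fun n => (∑ ℓ ∈ Finset.range n, (1 : ℝ) / (ℓ + 1))
        - ∑ ℓ ∈ Finset.range N, (1 : ℝ) / (ℓ + 1)) atTop atTop :=
      tendsto_atTop_add_const_right _ _ h
    refine h2.congr' ?_
    filter_upwards [eventually_ge_atTop N] with n hn
    rw [Finset.sum_Ico_eq_sub _ hn]
  have hexp : Tendsto (fun n => Real.exp (-(c * ∑ ℓ ∈ Finset.Ico N n, (1 : ℝ) / (ℓ + 1))))
      atTop (𝓝 0) := by
    refine Real.tendsto_exp_atBot.comp ?_
    exact tendsto_neg_atTop_atBot.comp (hsum.const_mul_atTop hc)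
  refine tendsto_of_tendsto_of_tendsto_of_le_of_le' tendsto_const_nhds hexp ?_ ?_
  · filter_upwards [eventually_ge_atTop N] with n hn
    exact Finset.prod_nonneg fun ℓ hℓ => h0 ℓ (Finset.mem_Ico.mp hℓ).1
  · filter_upwards [eventually_ge_atTop N] with n hn
    calc ∏ ℓ ∈ Finset.Ico N n, u ℓ
        ≤ ∏ ℓ ∈ Finset.Ico N n, Real.exp (-(c * (1 / (ℓ + 1)))) := by
          refine Finset.prod_le_prod (fun ℓ hℓ => h0 ℓ (Finset.mem_Ico.mp hℓ).1) ?_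
          intro ℓ hℓ
          have hb := h1 ℓ (Finset.mem_Ico.mp hℓ).1
          have := Real.add_one_le_exp (-(c * (1 / (ℓ + 1 : ℝ))))
          rw [div_eq_mul_one_div] at hb
          linarith [hb, this]
      _ = Real.exp (-(c * ∑ ℓ ∈ Finset.Ico N n, (1 : ℝ) / (ℓ + 1))) := by
          rw [← Real.exp_sum]
          congr 1
          rw [Finset.mul_sum, ← Finset.sum_neg_distrib]

lemma aux_rec_tendsto_zero (y β γ : ℕ → ℝ) (N : ℕ) (c : ℝ) (hc : 0 < c)
    (hy : ∀ n, 0 ≤ y n) (hγ : ∀ n, 0 ≤ γ n)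
    (hβ1 : ∀ n, N ≤ n → c / (n + 1) ≤ β n) (hβ2 : ∀ n, N ≤ n → β n ≤ 1)
    (hrec : ∀ n, N ≤ n → y (n + 1) ≤ (1 - β n) * y n + γ n)
    (hγ0 : Tendsto (fun n : ℕ => ((n : ℝ) + 1) * γ n) atTop (𝓝 0)) :
    Tendsto y atTop (𝓝 0) := by
  rw [NormedAddCommGroup.tendsto_nhds_zero]
  intro ε hε
  have hδ : (0:ℝ) < ε / 3 := by linarith
  obtain ⟨N1, hN1⟩ := Filter.eventually_atTop.mp
    ((hγ0.eventually (eventually_le_nhds (by positivity : (0:ℝ) < c * (ε / 3)))).and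
      (eventually_ge_atTop N))
  -- key inequality by induction
  have key : ∀ m, y (N1 + m) - ε / 3 ≤ (∏ ℓ ∈ Finset.Ico N1 (N1 + m), (1 - β ℓ)) * y N1 := by
    intro m
    induction m with
    | zero => simp [hδ.le]
    | succ m ih =>
      set n := N1 + m with hn
      have hnN1 : N1 ≤ n := Nat.le_add_right _ _
      have hnN : N ≤ n := le_trans (hN1 N1 le_rfl).2 hnN1
      have hβn : 1 - β n ≥ 0 := by linarith [hβ2 n hnN]
      have hγn : γ n ≤ β n * (ε / 3) := by
        have h1 := (hN1 n hnN1).1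
        have h2 := hβ1 n hnN
        have hpos : (0:ℝ) < (n:ℝ) + 1 := by positivity
        have h3 : γ n ≤ c * (ε / 3) / ((n:ℝ) + 1) := by
          rw [le_div_iff₀ hpos]; linarith [h1]
        refine h3.trans ?_
        calc c * (ε / 3) / (↑n + 1) = c / (↑n + 1) * (ε / 3) := by ring
          _ ≤ β n * (ε / 3) := mul_le_mul_of_nonneg_right h2 hδ.le
      have hstep : y (n + 1) - ε / 3 ≤ (1 - β n) * (y n - ε / 3) := by
        have := hrec n hnN
        nlinarith [hβ2 n hnN]
      have : y (n + 1) - ε / 3 ≤ (1 - β n) * ((∏ ℓ ∈ Finset.Ico N1 n, (1 - β ℓ)) * y N1) := by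
        refine hstep.trans ?_
        exact mul_le_mul_of_nonneg_left ih hβn
      rw [show N1 + (m + 1) = n + 1 from rfl]
      rw [Finset.prod_Ico_succ_top hnN1]
      calc y (n+1) - ε/3 ≤ (1 - β n) * ((∏ ℓ ∈ Finset.Ico N1 n, (1 - β ℓ)) * y N1) := this
        _ = (∏ ℓ ∈ Finset.Ico N1 n, (1 - β ℓ)) * (1 - β n) * y N1 := by ring
  have hP : Tendsto (fun n => (∏ ℓ ∈ Finset.Ico N1 n, (1 - β ℓ)) * y N1) atTop (𝓝 0) := by
    have h0 : ∀ n, N1 ≤ n → (0:ℝ) ≤ 1 - β n := fun n hn => by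
      linarith [hβ2 n (le_trans (hN1 N1 le_rfl).2 hn)]
    have h1 : ∀ n, N1 ≤ n → 1 - β n ≤ 1 - c / (n + 1) := fun n hn => by
      linarith [hβ1 n (le_trans (hN1 N1 le_rfl).2 hn)]
    simpa using (aux_prod_tendsto_zero _ N1 c hc h0 h1).mul_const (y N1)
  filter_upwards [hP.eventually (eventually_lt_nhds hδ), eventually_ge_atTop N1] with n h1 h2
  have := key (n - N1)
  rw [Nat.add_sub_cancel' h2] at this
  rw [Real.norm_eq_abs, abs_of_nonneg (hy n)]
  linarith

lemma aux_core (q : ℕ → ℝ) (α : ℝ) (hα : α < 1)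
    (hq : Tendsto (fun n : ℕ => (n : ℝ) * (q n - 1)) atTop (𝓝 α)) :
    (∀ k, Tendsto (fun n : ℕ => (∏ ℓ ∈ Finset.Ico k n, q ℓ) / n) atTop (𝓝 0)) ∧
    Tendsto (fun n : ℕ => (∑ k ∈ Finset.Icc 1 n, ∏ ℓ ∈ Finset.Ico k n, q ℓ) / n) atTop
      (𝓝 (1 / (1 - α))) ∧
    (∀ e : ℕ → ℝ, (∀ k, 0 ≤ e k) → Tendsto e atTop (𝓝 0) →
      Tendsto (fun n : ℕ => (∑ k ∈ Finset.Icc 1 n, |∏ ℓ ∈ Finset.Ico k n, q ℓ| * e k) / n)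
        atTop (𝓝 0)) := by
  set r : ℝ := (max α 0 + 1) / 2 with hr
  have hmax1 : max α 0 < 1 := max_lt hα one_pos
  have hr0 : 0 < r := by
    have : (0:ℝ) ≤ max α 0 := le_max_right _ _
    rw [hr]; linarith
  have hr1 : r < 1 := by rw [hr]; linarith
  have hαr : α < r := by
    have h1 : α ≤ max α 0 := le_max_left _ _
    rw [hr]; linarith
  -- q tends to 1
  have hq1 : Tendsto q atTop (𝓝 1) := by
    have h1 : Tendsto (fun n : ℕ => ((n : ℝ) * (q n - 1)) * (1 / n)) atTop (𝓝 (α * 0)) :=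
      hq.mul tendsto_one_div_atTop_nhds_zero_nat
    have h2 : Tendsto (fun n : ℕ => q n - 1) atTop (𝓝 0) := by
      rw [show (0:ℝ) = α * 0 by ring]
      refine h1.congr' ?_
      filter_upwards [eventually_ge_atTop 1] with n hn
      have hn0 : (n:ℝ) ≠ 0 := Nat.cast_ne_zero.mpr (by omega)
      field_simp
    simpa using h2.add_const 1
  -- choose threshold K
  obtain ⟨K, hK⟩ := Filter.eventually_atTop.mp
    (((hq1.eventually (eventually_gt_nhds one_pos)).and
      (hq.eventually (eventually_le_nhds hαr))).and (eventually_ge_atTop 1))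
  have hKq : ∀ ℓ, K ≤ ℓ → 0 < q ℓ := fun ℓ hℓ => (hK ℓ hℓ).1.1
  have hK1 : 1 ≤ K := (hK K le_rfl).2
  have hKr : ∀ ℓ, K ≤ ℓ → (ℓ : ℝ) * (q ℓ - 1) ≤ r := fun ℓ hℓ => (hK ℓ hℓ).1.2
  have hcpos : ∀ k n, K ≤ k → 0 < ∏ ℓ ∈ Finset.Ico k n, q ℓ := by
    intro k n hk
    exact Finset.prod_pos fun ℓ hℓ => hKq ℓ (le_trans hk (Finset.mem_Ico.mp hℓ).1)
  have hKpos : (0:ℝ) < K := by exact_mod_cast hK1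
  -- Step v : (∏_{Ico K n} q)/n → 0
  have hv : Tendsto (fun n : ℕ => (∏ ℓ ∈ Finset.Ico K n, q ℓ) / n) atTop (𝓝 0) := by
    have hid : ∀ m : ℕ, (∏ ℓ ∈ Finset.Ico K (K + m), q ℓ) / ((K + m : ℕ) : ℝ) =
        ((1 : ℝ) / K) * ∏ ℓ ∈ Finset.Ico K (K + m), (q ℓ * ((ℓ : ℝ) / ((ℓ : ℝ) + 1))) := by
      intro m
      induction m with
      | zero => simp
      | succ m ih =>
        have hKm : K ≤ K + m := Nat.le_add_right _ _
        have hn0 : ((K + m : ℕ) : ℝ) ≠ 0 := by positivity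
        have hP : (∏ ℓ ∈ Finset.Ico K (K + m), q ℓ) =
            ((1 : ℝ) / K) * (∏ ℓ ∈ Finset.Ico K (K + m), (q ℓ * ((ℓ : ℝ) / ((ℓ : ℝ) + 1))))
              * ((K + m : ℕ) : ℝ) := by
          rw [← ih, div_mul_cancel₀ _ hn0]
        rw [show K + (m + 1) = (K + m) + 1 from rfl, Finset.prod_Ico_succ_top hKm,
          Finset.prod_Ico_succ_top hKm, hP]
        push_cast
        ring
    have hW : Tendsto (fun n : ℕ =>
        ((1 : ℝ) / K) * ∏ ℓ ∈ Finset.Ico K n, (q ℓ * ((ℓ : ℝ) / ((ℓ : ℝ) + 1)))) atTop (𝓝 0) := by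
      have haux := aux_prod_tendsto_zero (fun ℓ => q ℓ * ((ℓ : ℝ) / ((ℓ : ℝ) + 1))) K (1 - r)
        (by linarith) ?_ ?_
      · simpa using haux.const_mul ((1:ℝ)/K)
      · intro ℓ hℓ
        have h2 : (0:ℝ) ≤ (ℓ : ℝ) / ((ℓ : ℝ) + 1) := by positivity
        exact mul_nonneg (hKq ℓ hℓ).le h2
      · intro ℓ hℓ
        have hpos : (0:ℝ) < (ℓ : ℝ) + 1 := by positivity
        have h3 := hKr ℓ hℓ
        show q ℓ * ((ℓ : ℝ) / ((ℓ : ℝ) + 1)) ≤ 1 - (1 - r) / ((ℓ:ℝ) + 1)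
        rw [mul_div_assoc', div_le_iff₀ hpos]
        have : (1 - (1 - r) / ((ℓ:ℝ) + 1)) * ((ℓ:ℝ) + 1) = (ℓ:ℝ) + r := by
          field_simp
          ring
        rw [this]
        nlinarith
    refine hW.congr' ?_
    filter_upwards [eventually_ge_atTop K] with n hn
    have := hid (n - K)
    rw [Nat.add_sub_cancel' hn] at this
    exact this.symm
  -- hB1
  have hB1 : ∀ k, Tendsto (fun n : ℕ => (∏ ℓ ∈ Finset.Ico k n, q ℓ) / n) atTop (𝓝 0) := by
    intro k
    rcases le_or_gt k K with hk | hk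
    · have h := hv.const_mul (∏ ℓ ∈ Finset.Ico k K, q ℓ)
      rw [mul_zero] at h
      refine h.congr' ?_
      filter_upwards [eventually_ge_atTop K] with n hn
      rw [mul_div_assoc', ← Finset.prod_Ico_consecutive q hk hn]
    · have hD : (0:ℝ) < ∏ ℓ ∈ Finset.Ico K k, q ℓ :=
        Finset.prod_pos fun ℓ hℓ => hKq ℓ (Finset.mem_Ico.mp hℓ).1
      have h := hv.const_mul (∏ ℓ ∈ Finset.Ico K k, q ℓ)⁻¹
      rw [mul_zero] at h
      refine h.congr' ?_
      filter_upwards [eventually_ge_atTop k] with n hn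
      rw [mul_div_assoc']
      congr 1
      rw [← Finset.prod_Ico_consecutive q hk.le hn, inv_mul_cancel_left₀ hD.ne']
  -- the partial sums S and their Cesàro limit
  set S : ℕ → ℝ := fun n => ∑ k ∈ Finset.Icc K n, ∏ ℓ ∈ Finset.Ico k n, q ℓ with hS
  have hSrec : ∀ n, K ≤ n → S (n + 1) = q n * S n + 1 := by
    intro n hn
    have h1 : Finset.Icc K (n + 1) = insert (n + 1) (Finset.Icc K n) := by
      ext x
      simp only [Finset.mem_Icc, Finset.mem_insert]
      omega
    rw [hS]
    simp only
    rw [h1, Finset.sum_insert (by simp), Finset.Ico_self, Finset.prod_empty]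
    rw [Finset.sum_congr rfl (fun k hk => Finset.prod_Ico_succ_top (Finset.mem_Icc.mp hk).2 q),
      ← Finset.sum_mul]
    ring
  set L : ℝ := 1 / (1 - α) with hL
  have h1α : (1:ℝ) - α ≠ 0 := by linarith
  have hx : Tendsto (fun n : ℕ => S n / n) atTop (𝓝 L) := by
    rw [tendsto_iff_norm_sub_tendsto_zero]
    simp only [Real.norm_eq_abs]
    refine aux_rec_tendsto_zero (fun n => |S n / n - L|)
      (fun n : ℕ => 1 - (n : ℝ) * q n / ((n:ℝ) + 1))
      (fun n : ℕ => |1 / ((n:ℝ) + 1) + ((n:ℝ) * q n / ((n:ℝ) + 1) - 1) * L|)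
      K (1 - r) (by linarith) (fun n => abs_nonneg _) (fun n => abs_nonneg _) ?_ ?_ ?_ ?_
    · intro n hn
      have hpos : (0:ℝ) < (n:ℝ) + 1 := by positivity
      have h3 := hKr n hn
      show (1 - r) / ((n:ℝ) + 1) ≤ 1 - (n:ℝ) * q n / ((n:ℝ) + 1)
      have key : (1:ℝ) - (n:ℝ) * q n / ((n:ℝ) + 1) = ((n:ℝ) + 1 - (n:ℝ) * q n) / ((n:ℝ) + 1) := by
        field_simp
      rw [key, div_le_div_iff_of_pos_right hpos]
      nlinarith
    · intro n hn
      have hpos : (0:ℝ) < (n:ℝ) + 1 := by positivity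
      have hq0 : 0 ≤ (n:ℝ) * q n := mul_nonneg (Nat.cast_nonneg n) (hKq n hn).le
      have : 0 ≤ (n:ℝ) * q n / ((n:ℝ) + 1) := div_nonneg hq0 hpos.le
      linarith
    · intro n hn
      have hn1 : 1 ≤ n := le_trans hK1 hn
      have hn0 : (n:ℝ) ≠ 0 := Nat.cast_ne_zero.mpr (by omega)
      have hpos : (0:ℝ) < (n:ℝ) + 1 := by positivity
      have hxid : S (n + 1) / ((n + 1 : ℕ) : ℝ) - L =
          ((n:ℝ) * q n / ((n:ℝ) + 1)) * (S n / (n:ℝ) - L)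
            + (1 / ((n:ℝ) + 1) + ((n:ℝ) * q n / ((n:ℝ) + 1) - 1) * L) := by
        rw [hSrec n hn]
        push_cast
        field_simp
        ring
      have hA0 : 0 ≤ (n:ℝ) * q n / ((n:ℝ) + 1) :=
        div_nonneg (mul_nonneg (Nat.cast_nonneg n) (hKq n hn).le) hpos.le
      calc |S (n+1) / ((n+1 : ℕ) : ℝ) - L|
          = |((n:ℝ) * q n / ((n:ℝ) + 1)) * (S n / (n:ℝ) - L)
            + (1 / ((n:ℝ) + 1) + ((n:ℝ) * q n / ((n:ℝ) + 1) - 1) * L)| := by rw [hxid]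
        _ ≤ |((n:ℝ) * q n / ((n:ℝ) + 1)) * (S n / (n:ℝ) - L)|
            + |1 / ((n:ℝ) + 1) + ((n:ℝ) * q n / ((n:ℝ) + 1) - 1) * L| := abs_add_le _ _
        _ = (1 - (1 - (n:ℝ) * q n / ((n:ℝ) + 1))) * |S n / (n:ℝ) - L|
            + |1 / ((n:ℝ) + 1) + ((n:ℝ) * q n / ((n:ℝ) + 1) - 1) * L| := by
            rw [abs_mul, abs_of_nonneg hA0]
            ring
    · have hid2 : ∀ n : ℕ, ((n:ℝ) + 1) *
          |1 / ((n:ℝ) + 1) + ((n:ℝ) * q n / ((n:ℝ) + 1) - 1) * L|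
          = |1 + ((n:ℝ) * (q n - 1) - 1) * L| := by
        intro n
        have hpos : (0:ℝ) < (n:ℝ) + 1 := by positivity
        have habs : ((n:ℝ) + 1) * |1 / ((n:ℝ) + 1) + ((n:ℝ) * q n / ((n:ℝ) + 1) - 1) * L|
            = |((n:ℝ) + 1) * (1 / ((n:ℝ) + 1) + ((n:ℝ) * q n / ((n:ℝ) + 1) - 1) * L)| := by
          rw [abs_mul, abs_of_pos hpos]
        have hexp : ((n:ℝ) + 1) * (1 / ((n:ℝ) + 1) + ((n:ℝ) * q n / ((n:ℝ) + 1) - 1) * L)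
            = 1 + ((n:ℝ) * (q n - 1) - 1) * L := by
          field_simp
          ring
        rw [habs, hexp]
      have h3 : Tendsto (fun n : ℕ => |1 + ((n:ℝ) * (q n - 1) - 1) * L|) atTop
          (𝓝 (|1 + (α - 1) * L|)) := (((hq.sub_const 1).mul_const L).const_add 1).abs
      have h4 : |1 + (α - 1) * L| = 0 := by
        rw [abs_eq_zero, hL]
        field_simp
        ring
      rw [h4] at h3
      exact h3.congr fun n => (hid2 n).symm
  refine ⟨hB1, ?_, ?_⟩
  · -- Cesàro limit of full sums
    have h4 : Tendsto (fun n : ℕ =>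
        ∑ k ∈ Finset.Ico 1 K, ((∏ ℓ ∈ Finset.Ico k n, q ℓ) / n)) atTop (𝓝 0) := by
      have := tendsto_finset_sum (Finset.Ico 1 K) (fun k _ => hB1 k)
      simpa using this
    have h5 := h4.add hx
    rw [zero_add] at h5
    refine h5.congr' ?_
    filter_upwards [eventually_ge_atTop K] with n hn
    rw [← Finset.sum_div, ← add_div]
    congr 1
    simp only [hS]
    rw [← Finset.Ico_add_one_right_eq_Icc K n, ← Finset.Ico_add_one_right_eq_Icc 1 n]
    exact Finset.sum_Ico_consecutive _ hK1 (by omega)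
  · -- the weighted Toeplitz part
    intro e he0 helim
    rw [NormedAddCommGroup.tendsto_nhds_zero]
    intro δ hδ
    set M : ℝ := |L| + 1 with hM
    have hM0 : (0:ℝ) < M := by positivity
    have hxev : ∀ᶠ n in atTop, S n / (n:ℝ) < M :=
      hx.eventually (eventually_lt_nhds (by rw [hM]; linarith [le_abs_self L]))
    set ε : ℝ := δ / (2 * M) with hε
    have hε0 : 0 < ε := by rw [hε]; positivity
    obtain ⟨K', hK'⟩ := Filter.eventually_atTop.mp
      ((helim.eventually (eventually_le_nhds hε0)).and (eventually_ge_atTop K))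
    have hK'K : K ≤ K' := (hK' K' le_rfl).2
    have h1 : Tendsto (fun n : ℕ =>
        ∑ k ∈ Finset.Ico 1 K', |∏ ℓ ∈ Finset.Ico k n, q ℓ| / n * e k) atTop (𝓝 0) := by
      have hterm : ∀ k : ℕ, Tendsto (fun n : ℕ =>
          |∏ ℓ ∈ Finset.Ico k n, q ℓ| / (n:ℝ) * e k) atTop (𝓝 0) := by
        intro k
        have h2 := (hB1 k).abs
        rw [abs_zero] at h2
        have h3 := h2.mul_const (e k)
        rw [zero_mul] at h3
        refine h3.congr' ?_
        filter_upwards [eventually_ge_atTop 1] with n hn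
        rw [abs_div, Nat.abs_cast]
      have := tendsto_finset_sum (Finset.Ico 1 K') (fun k _ => hterm k)
      simpa using this
    filter_upwards [hxev, eventually_ge_atTop K', eventually_ge_atTop 1,
      h1.eventually (eventually_lt_nhds (by positivity : (0:ℝ) < δ / 2))]
      with n hxn hnK' hn1 hpart1
    have hnpos : (0:ℝ) < n := by exact_mod_cast Nat.pos_of_ne_zero (by omega)
    have hsplit : (∑ k ∈ Finset.Icc 1 n, |∏ ℓ ∈ Finset.Ico k n, q ℓ| * e k)
        = (∑ k ∈ Finset.Ico 1 K', |∏ ℓ ∈ Finset.Ico k n, q ℓ| * e k)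
          + ∑ k ∈ Finset.Icc K' n, |∏ ℓ ∈ Finset.Ico k n, q ℓ| * e k := by
      rw [← Finset.Ico_add_one_right_eq_Icc 1 n,
        ← Finset.sum_Ico_consecutive (fun k => |∏ ℓ ∈ Finset.Ico k n, q ℓ| * e k)
          (le_trans hK1 hK'K) (by omega),
        Finset.Ico_add_one_right_eq_Icc]
    have hsecond : ∑ k ∈ Finset.Icc K' n, |∏ ℓ ∈ Finset.Ico k n, q ℓ| * e k ≤ ε * S n := by
      calc ∑ k ∈ Finset.Icc K' n, |∏ ℓ ∈ Finset.Ico k n, q ℓ| * e k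
          ≤ ∑ k ∈ Finset.Icc K' n, (∏ ℓ ∈ Finset.Ico k n, q ℓ) * ε := by
            refine Finset.sum_le_sum ?_
            intro k hk
            have hkK : K ≤ k := le_trans hK'K (Finset.mem_Icc.mp hk).1
            rw [abs_of_pos (hcpos k n hkK)]
            exact mul_le_mul_of_nonneg_left ((hK' k (Finset.mem_Icc.mp hk).1).1)
              (hcpos k n hkK).le
        _ = (∑ k ∈ Finset.Icc K' n, ∏ ℓ ∈ Finset.Ico k n, q ℓ) * ε := by
            rw [Finset.sum_mul]
        _ ≤ (∑ k ∈ Finset.Icc K n, ∏ ℓ ∈ Finset.Ico k n, q ℓ) * ε := by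
            refine mul_le_mul_of_nonneg_right
              (Finset.sum_le_sum_of_subset_of_nonneg
                (Finset.Icc_subset_Icc_left hK'K) ?_) hε0.le
            intro k hk _
            exact (hcpos k n (Finset.mem_Icc.mp hk).1).le
        _ = ε * S n := by rw [mul_comm, hS]
    have hU0 : 0 ≤ (∑ k ∈ Finset.Icc 1 n, |∏ ℓ ∈ Finset.Ico k n, q ℓ| * e k) / n :=
      div_nonneg (Finset.sum_nonneg fun k _ => mul_nonneg (abs_nonneg _) (he0 k)) hnpos.le
    rw [Real.norm_eq_abs, abs_of_nonneg hU0, hsplit, add_div]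
    have hfirst : (∑ k ∈ Finset.Ico 1 K', |∏ ℓ ∈ Finset.Ico k n, q ℓ| * e k) / (n:ℝ)
        = ∑ k ∈ Finset.Ico 1 K', |∏ ℓ ∈ Finset.Ico k n, q ℓ| / (n:ℝ) * e k := by
      rw [Finset.sum_div]
      exact Finset.sum_congr rfl fun k _ => by ring
    have h2' : (∑ k ∈ Finset.Icc K' n, |∏ ℓ ∈ Finset.Ico k n, q ℓ| * e k) / (n:ℝ)
        ≤ ε * (S n / n) := by
      calc (∑ k ∈ Finset.Icc K' n, |∏ ℓ ∈ Finset.Ico k n, q ℓ| * e k) / (n:ℝ)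
          ≤ (ε * S n) / (n:ℝ) := by gcongr
        _ = ε * (S n / n) := mul_div_assoc ε (S n) (n:ℝ)
    have h3' : ε * (S n / n) ≤ ε * M := mul_le_mul_of_nonneg_left hxn.le hε0.le
    have hεM : ε * M = δ / 2 := by rw [hε]; field_simp
    rw [hfirst]
    linarith

lemma aux_tim_add {Ω : Type*} [MeasurableSpace Ω] {μ : Measure Ω} {f g : ℕ → Ω → ℝ}
    {F G : Ω → ℝ} (hf : TendstoInMeasure μ f atTop F) (hg : TendstoInMeasure μ g atTop G) :
    TendstoInMeasure μ (fun n ω => f n ω + g n ω) atTop (fun ω => F ω + G ω) := by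
  rw [tendstoInMeasure_iff_dist] at hf hg ⊢
  intro ε hε
  have h2 : (0:ℝ) < ε / 2 := by positivity
  have hsub : ∀ n, {x | ε ≤ dist (f n x + g n x) (F x + G x)} ⊆
      {x | ε / 2 ≤ dist (f n x) (F x)} ∪ {x | ε / 2 ≤ dist (g n x) (G x)} := by
    intro n x hx
    by_contra hcon
    simp only [Set.mem_union, Set.mem_setOf_eq, not_or, not_le] at hcon
    have := dist_add_add_le (f n x) (g n x) (F x) (G x)
    simp only [Set.mem_setOf_eq] at hx
    linarith [hcon.1, hcon.2]
  have hle : ∀ n, μ {x | ε ≤ dist (f n x + g n x) (F x + G x)} ≤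
      μ {x | ε / 2 ≤ dist (f n x) (F x)} + μ {x | ε / 2 ≤ dist (g n x) (G x)} := fun n =>
    le_trans (measure_mono (hsub n)) (measure_union_le _ _)
  have hsum := (hf (ε/2) h2).add (hg (ε/2) h2)
  rw [add_zero] at hsum
  exact tendsto_of_tendsto_of_tendsto_of_le_of_le tendsto_const_nhds hsum
    (fun n => zero_le) hle



/-- **Weighted Toeplitz-type convergence in probability** (Corollary 3).  If `s > 0`,
`t₀ > 0`, `λ₁ = s ≥ λ₂ ≥ … ≥ λ_d` with `s > 2 λⱼ` for `j ≥ 2`, and `Z n → Z` in probability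
(with, as in the paper's proof, `E|Z n − Z| → 0`), then for all `2 ≤ i ≤ j ≤ d`,
`(1/n) ∑_{k=1}^n b_{n,k}(i) b_{n,k}(j) Z k → (s / (s − λᵢ − λⱼ)) Z` in probability. -/
theorem bCoef_weighted_tendsto_in_probability {d : ℕ} [NeZero d] (hd : 2 ≤ d) (s t0 : ℝ)
    (hs : 0 < s) (ht0 : 0 < t0) (lam : Fin d → ℝ) (hlam0 : lam 0 = s) (hanti : Antitone lam)
    (hsmall : ∀ j : Fin d, j ≠ 0 → 2 * lam j < s)
    {Ω : Type*} [mΩ : MeasurableSpace Ω] (μ : Measure Ω) [IsProbabilityMeasure μ]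
    (Z : ℕ → Ω → ℝ) (Zlim : Ω → ℝ) (hZmeas : ∀ n, Measurable (Z n)) (hZlim : Measurable Zlim)
    (hprob : TendstoInMeasure μ Z atTop Zlim)
    (hint : ∀ n, Integrable (fun ω => Z n ω - Zlim ω) μ)
    (hL1 : Tendsto (fun n => ∫ ω, |Z n ω - Zlim ω| ∂μ) atTop (𝓝 0)) :
    ∀ i j : Fin d, i ≠ 0 → j ≠ 0 → i ≤ j →
      TendstoInMeasure μ
        (fun (n : ℕ) ω => (1 / n : ℝ) * ∑ k ∈ Finset.Icc 1 n,
          bCoef s t0 (lam i) n k * bCoef s t0 (lam j) n k * Z k ω)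
        atTop (fun ω => s / (s - lam i - lam j) * Zlim ω) := by
  intro i j hi hj hij
  simp only [bCoef]
  have hia : 2 * lam i < s := hsmall i hi
  have hja : 2 * lam j < s := hsmall j hj
  set a : ℝ := lam i + lam j with ha
  have has : a < s := by rw [ha]; linarith
  set q : ℕ → ℝ := fun ℓ => (1 + lam i / (t0 + ℓ * s)) * (1 + lam j / (t0 + ℓ * s)) with hqdef
  have htpos : ∀ ℓ : ℕ, 0 < t0 + (ℓ:ℝ) * s := fun ℓ => by positivity
  -- limit of n * (q n - 1)
  have hq : Tendsto (fun n : ℕ => (n : ℝ) * (q n - 1)) atTop (𝓝 (a / s)) := by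
    have hid : ∀ n : ℕ, (n : ℝ) * (q n - 1) =
        a * ((n:ℝ) / (t0 + (n:ℝ) * s)) +
          (lam i * lam j) * ((n:ℝ) / (t0 + (n:ℝ) * s)) * (1 / (t0 + (n:ℝ) * s)) := by
      intro n
      have h0 := (htpos n).ne'
      rw [hqdef, ha]
      field_simp
      ring
    have hf : Tendsto (fun n : ℕ => (n:ℝ) / (t0 + (n:ℝ) * s)) atTop (𝓝 (1 / s)) := by
      have h1 : Tendsto (fun n : ℕ => t0 * (1 / (n:ℝ)) + s) atTop (𝓝 (t0 * 0 + s)) :=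
        (tendsto_one_div_atTop_nhds_zero_nat.const_mul t0).add_const s
      rw [mul_zero, zero_add] at h1
      have h2 := h1.inv₀ hs.ne'
      rw [← one_div] at h2
      refine h2.congr' ?_
      filter_upwards [eventually_ge_atTop 1] with n hn
      have hn0 : (n:ℝ) ≠ 0 := Nat.cast_ne_zero.mpr (by omega)
      have := (htpos n).ne'
      field_simp
    have hg : Tendsto (fun n : ℕ => 1 / (t0 + (n:ℝ) * s)) atTop (𝓝 0) := by
      have h1 : Tendsto (fun n : ℕ => t0 + (n:ℝ) * s) atTop atTop :=
        tendsto_atTop_add_const_left _ t0 (Tendsto.atTop_mul_const hs tendsto_natCast_atTop_atTop)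
      simpa [one_div, Pi.inv_def] using h1.inv_tendsto_atTop
    have := ((hf.const_mul a).add (((hf.const_mul (lam i * lam j)).mul hg)))
    rw [show a * (1/s) + (lam i * lam j) * (1/s) * 0 = a / s by ring] at this
    exact this.congr fun n => (hid n).symm
  have hα : a / s < 1 := (div_lt_one hs).mpr has
  obtain ⟨hB1, hB2, hB3⟩ := aux_core q (a / s) hα hq
  have hsa : s - a ≠ 0 := by linarith
  have hLval : 1 / (1 - a / s) = s / (s - lam i - lam j) := by
    rw [show s - lam i - lam j = s - a by rw [ha]; ring]
    rw [show (1:ℝ) - a / s = (s - a) / s by field_simp]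
    rw [one_div_div]
  set e : ℕ → ℝ := fun k => ∫ ω, |Z k ω - Zlim ω| ∂μ with he
  have he0 : ∀ k, 0 ≤ e k := fun k => integral_nonneg fun ω => abs_nonneg _
  have hW := hB3 e he0 hL1
  set G : ℕ → Ω → ℝ := fun n ω => ∑ k ∈ Finset.Icc 1 n,
    ((1 / n : ℝ) * ∏ ℓ ∈ Finset.Ico k n, q ℓ) * (Z k ω - Zlim ω) with hG
  set H : ℕ → Ω → ℝ := fun n ω =>
    ((∑ k ∈ Finset.Icc 1 n, ∏ ℓ ∈ Finset.Ico k n, q ℓ) / n) * Zlim ω with hH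
  have hGmeas : ∀ n, Measurable (G n) := by
    intro n
    apply Finset.measurable_sum
    intro k _
    exact ((hZmeas k).sub hZlim).const_mul _
  have hGint : ∀ n, Integrable (G n) μ := by
    intro n
    apply integrable_finset_sum
    intro k _
    exact (hint k).const_mul _
  have hGbound : ∀ n : ℕ, ∫ ω, |G n ω| ∂μ ≤
      (∑ k ∈ Finset.Icc 1 n, |∏ ℓ ∈ Finset.Ico k n, q ℓ| * e k) / n := by
    intro n
    have hRint : Integrable (fun ω => ∑ k ∈ Finset.Icc 1 n,
        |(1 / n : ℝ) * ∏ ℓ ∈ Finset.Ico k n, q ℓ| * |Z k ω - Zlim ω|) μ := by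
      apply integrable_finset_sum
      intro k _
      exact (hint k).abs.const_mul _
    have h1 : ∫ ω, |G n ω| ∂μ ≤ ∫ ω, ∑ k ∈ Finset.Icc 1 n,
        |(1 / n : ℝ) * ∏ ℓ ∈ Finset.Ico k n, q ℓ| * |Z k ω - Zlim ω| ∂μ := by
      refine integral_mono (hGint n).abs hRint ?_
      intro ω
      rw [hG]
      refine (Finset.abs_sum_le_sum_abs _ _).trans ?_
      refine le_of_eq (Finset.sum_congr rfl fun k _ => ?_)
      rw [abs_mul]
    refine h1.trans (le_of_eq ?_)
    rw [integral_finset_sum _ (fun k _ => (hint k).abs.const_mul _)]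
    rw [Finset.sum_div]
    refine Finset.sum_congr rfl fun k _ => ?_
    rw [integral_const_mul]
    rw [abs_mul, abs_of_nonneg (by positivity : (0:ℝ) ≤ 1 / (n:ℝ))]
    have hek : (∫ x, |Z k x - Zlim x| ∂μ) = e k := rfl
    rw [hek]
    ring
  have hGtim : TendstoInMeasure μ G atTop (fun _ => (0:ℝ)) := by
    refine tendstoInMeasure_of_tendsto_eLpNorm (p := 1) one_ne_zero
      (fun n => (hGmeas n).aestronglyMeasurable) aestronglyMeasurable_const ?_
    have hnorm : ∀ n, eLpNorm (G n - fun _ => (0:ℝ)) 1 μ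
        = ENNReal.ofReal (∫ ω, ‖G n ω‖ ∂μ) := by
      intro n
      have hzero : (G n - fun _ => (0:ℝ)) = G n := by funext ω; simp
      rw [hzero, eLpNorm_one_eq_lintegral_enorm,
        ← ofReal_integral_norm_eq_lintegral_enorm (hGint n)]
    have hupper : Tendsto (fun n : ℕ => ENNReal.ofReal
        ((∑ k ∈ Finset.Icc 1 n, |∏ ℓ ∈ Finset.Ico k n, q ℓ| * e k) / n)) atTop (𝓝 0) := by
      have h := ENNReal.tendsto_ofReal hW
      rwa [ENNReal.ofReal_zero] at h
    refine tendsto_of_tendsto_of_tendsto_of_le_of_le tendsto_const_nhds hupper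
      (fun n => zero_le) (fun n => ?_)
    rw [hnorm n]
    exact ENNReal.ofReal_le_ofReal (by simpa [Real.norm_eq_abs] using hGbound n)
  have hHtim : TendstoInMeasure μ H atTop (fun ω => (1 / (1 - a / s)) * Zlim ω) := by
    refine tendstoInMeasure_of_tendsto_ae
      (fun n => (hZlim.const_mul _).aestronglyMeasurable) ?_
    refine ae_of_all _ fun ω => ?_
    simpa only [hH] using hB2.mul_const (Zlim ω)
  have hsum := aux_tim_add hGtim hHtim
  have hfun : (fun (n : ℕ) ω => (1 / n : ℝ) * ∑ k ∈ Finset.Icc 1 n,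
        (∏ ℓ ∈ Finset.Ico k n, (1 + lam i / (t0 + ℓ * s)))
          * (∏ ℓ ∈ Finset.Ico k n, (1 + lam j / (t0 + ℓ * s))) * Z k ω)
      = fun n ω => G n ω + H n ω := by
    funext n ω
    rw [hG, hH]
    simp only [hqdef]
    rw [Finset.mul_sum, Finset.sum_div, Finset.sum_mul, ← Finset.sum_add_distrib]
    refine Finset.sum_congr rfl fun k _ => ?_
    rw [← Finset.prod_mul_distrib]
    ring
  have hlim : (fun ω => s / (s - lam i - lam j) * Zlim ω)
      = fun ω => (0:ℝ) + (1 / (1 - a / s)) * Zlim ω := by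
    funext ω
    rw [zero_add, hLval]
  rw [hfun, hlim]
  exact hsum
end
end

section
/- Uniform limit of normalized partial products: for λ ∈ ℝ and ℓ > 0, define F_m^m(ℓ, λ) = 1 and F_m^n(ℓ, λ) = ∏_{i=m}^{n−1} (1 + λ/(ℓ + i)) for integers n > m ≥ 0. Then lim_{m→∞} sup_{n≥m} (m/n)^{λ} F_m^n(ℓ, λ) = 1. -/
open Filter
open scoped Topology

noncomputable section

/-- The partial products `F_m^n(ℓ, λ) = ∏_{i=m}^{n-1} (1 + λ / (ℓ + i))`, with the
convention `F_m^m = 1` (empty product). -/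
def prodF (ℓ lam : ℝ) (m n : ℕ) : ℝ :=
  ∏ i ∈ Finset.Ico m n, (1 + lam / (ℓ + i))

/-- Telescoping sum over `Ico`. -/
lemma tel_sum (f : ℕ → ℝ) {m n : ℕ} (h : m ≤ n) :
    ∑ i ∈ Finset.Ico m n, (f (i + 1) - f i) = f n - f m := by
  induction n, h using Nat.le_induction with
  | base => simp
  | succ n hn ih => rw [Finset.sum_Ico_succ_top hn, ih]; ring

lemma abs_log_one_add_sub_le {y : ℝ} (h : |y| ≤ 1 / 2) :
    |Real.log (1 + y) - y| ≤ 2 * y ^ 2 := by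
  have h1 : |(-y)| < 1 := by rw [abs_neg]; linarith
  have h2 := Real.abs_log_sub_add_sum_range_le h1 1
  simp only [Finset.sum_range_one, zero_add, pow_one, abs_neg, Nat.cast_zero, Nat.cast_one,
    div_one, sub_neg_eq_add] at h2
  rw [show Real.log (1 + y) - y = -y + Real.log (1 + y) from by ring]
  refine h2.trans ?_
  have hy : (0:ℝ) < 1 - |y| := by linarith
  have hpow : |y| ^ (1 + 1) = y ^ 2 := by rw [show 1 + 1 = 2 from rfl, sq_abs]
  rw [div_le_iff₀ hy, hpow]
  nlinarith [sq_nonneg y, abs_nonneg y, mul_nonneg (sq_nonneg y) (abs_nonneg y)]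

lemma term_bound (lam ℓ : ℝ) (hℓ : 0 < ℓ) {i : ℕ} (hi2 : (2:ℝ) ≤ i)
    (hil : 2 * |lam| ≤ (i : ℝ)) :
    |Real.log (1 + lam / (ℓ + i)) - lam * (Real.log (i + 1) - Real.log i)| ≤
      (2 * lam ^ 2 + |lam| * ℓ + 2 * |lam|) / (i : ℝ) ^ 2 := by
  have hi0 : (0:ℝ) < i := by linarith
  have hli : (0:ℝ) < ℓ + i := by linarith
  set x : ℝ := lam / (ℓ + i) with hxdef
  set u : ℝ := 1 / (i : ℝ) with hudef
  have hx : |x| ≤ 1 / 2 := by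
    rw [hxdef, abs_div, abs_of_pos hli, div_le_iff₀ hli]
    linarith
  have hu : |u| ≤ 1 / 2 := by
    rw [hudef, abs_div, abs_of_pos hi0, abs_one, div_le_iff₀ hi0]
    linarith
  have hlog : Real.log (i + 1) - Real.log i = Real.log (1 + u) := by
    rw [hudef]
    rw [show (1 : ℝ) + 1 / i = ((i:ℝ) + 1) / i by field_simp]
    rw [Real.log_div (by positivity) (by positivity)]
  have hA : |Real.log (1 + x) - x| ≤ 2 * x ^ 2 := abs_log_one_add_sub_le hx
  have hB : |Real.log (1 + u) - u| ≤ 2 * u ^ 2 := abs_log_one_add_sub_le hu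
  have hx2 : 2 * x ^ 2 ≤ 2 * lam ^ 2 / (i:ℝ) ^ 2 := by
    have heq : 2 * x ^ 2 = 2 * lam ^ 2 / (ℓ + i) ^ 2 := by
      rw [hxdef, div_pow]; ring
    rw [heq]
    gcongr
    nlinarith
  have hu2 : 2 * u ^ 2 = 2 / (i:ℝ) ^ 2 := by rw [hudef]; field_simp
  have hxu : |x - lam * u| ≤ |lam| * ℓ / (i:ℝ) ^ 2 := by
    have hval : x - lam * u = -(lam * ℓ) / ((i:ℝ) * (ℓ + i)) := by
      rw [hxdef, hudef]; field_simp; ring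
    rw [hval, abs_div, abs_neg, abs_mul, abs_of_pos (by positivity : (0:ℝ) < (i:ℝ) * (ℓ + i))]
    rw [div_le_div_iff₀ (by positivity) (by positivity)]
    have h1 : (i:ℝ) ^ 2 ≤ (i:ℝ) * (ℓ + i) := by nlinarith
    have h2 : |lam| * ℓ ≥ 0 := by positivity
    calc |lam| * |ℓ| * (i:ℝ)^2 = |lam| * ℓ * (i:ℝ)^2 := by rw [abs_of_pos hℓ]
      _ ≤ |lam| * ℓ * ((i:ℝ) * (ℓ + i)) := by nlinarith
  have key : Real.log (1 + x) - lam * Real.log (1 + u)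
      = (Real.log (1 + x) - x) - lam * (Real.log (1 + u) - u) + (x - lam * u) := by ring
  rw [hlog, key]
  have hlamB : |lam * (Real.log (1 + u) - u)| ≤ |lam| * (2 / (i:ℝ)^2) := by
    rw [abs_mul]
    exact mul_le_mul_of_nonneg_left (hB.trans_eq hu2) (abs_nonneg lam)
  calc |(Real.log (1 + x) - x) - lam * (Real.log (1 + u) - u) + (x - lam * u)|
      ≤ |(Real.log (1 + x) - x) - lam * (Real.log (1 + u) - u)| + |x - lam * u| := abs_add_le _ _
    _ ≤ (|Real.log (1 + x) - x| + |lam * (Real.log (1 + u) - u)|) + |x - lam * u| := by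
        gcongr; exact abs_sub _ _
    _ ≤ (2 * lam ^ 2 / (i:ℝ)^2 + |lam| * (2 / (i:ℝ)^2)) + |lam| * ℓ / (i:ℝ)^2 := by
        gcongr
        exact hA.trans hx2
    _ = (2 * lam ^ 2 + |lam| * ℓ + 2 * |lam|) / (i : ℝ) ^ 2 := by ring

lemma sum_inv_sq_le (m n : ℕ) (hm : 1 ≤ m) :
    ∑ i ∈ Finset.Ico m n, ((i : ℝ) ^ 2)⁻¹ ≤ 2 / (m : ℝ) := by
  have hsub : Finset.Ico m n ⊆ Finset.Ioo (m - 1) n := by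
    intro i hi
    simp only [Finset.mem_Ico, Finset.mem_Ioo] at *
    omega
  calc ∑ i ∈ Finset.Ico m n, ((i : ℝ) ^ 2)⁻¹
      ≤ ∑ i ∈ Finset.Ioo (m - 1) n, ((i : ℝ) ^ 2)⁻¹ :=
        Finset.sum_le_sum_of_subset_of_nonneg hsub (fun i _ _ => by positivity)
    _ ≤ 2 / ((m - 1 : ℕ) + 1) := sum_Ioo_inv_sq_le _ _
    _ = 2 / (m : ℝ) := by
        congr 1
        have : m - 1 + 1 = m := Nat.sub_add_cancel hm
        exact_mod_cast congrArg (Nat.cast (R := ℝ)) this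

/-- Key uniform estimate. -/
lemma key_estimate (lam ℓ : ℝ) (hℓ : 0 < ℓ) {m n : ℕ} (hm2 : 2 ≤ m)
    (hml : 2 * |lam| ≤ (m : ℝ)) (hmn : m ≤ n) :
    ∃ s : ℝ, ((m : ℝ) / n) ^ lam * prodF ℓ lam m n = Real.exp s ∧
      |s| ≤ (2 * lam ^ 2 + |lam| * ℓ + 2 * |lam|) * (2 / m) := by
  have hm0 : (0:ℝ) < m := by
    have : 0 < m := by omega
    exact_mod_cast this
  have hn0 : (0:ℝ) < n := by
    have : 0 < n := by omega
    exact_mod_cast this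
  refine ⟨∑ i ∈ Finset.Ico m n,
      (Real.log (1 + lam / (ℓ + i)) - lam * (Real.log ((i:ℝ) + 1) - Real.log i)), ?_, ?_⟩
  · have hpos : ∀ i ∈ Finset.Ico m n, (0:ℝ) < 1 + lam / (ℓ + i) := by
      intro i hi
      have him : m ≤ i := (Finset.mem_Ico.mp hi).1
      have hmi : (m:ℝ) ≤ i := by exact_mod_cast him
      have hi0 : (0:ℝ) < i := by linarith
      have hli : (0:ℝ) < ℓ + i := by linarith
      have habs : |lam / (ℓ + i)| ≤ 1 / 2 := by
        rw [abs_div, abs_of_pos hli, div_le_iff₀ hli]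
        linarith
      have := (abs_le.mp habs).1
      linarith
    have hprod : prodF ℓ lam m n
        = Real.exp (∑ i ∈ Finset.Ico m n, Real.log (1 + lam / (ℓ + i))) := by
      rw [Real.exp_sum, prodF]
      exact Finset.prod_congr rfl fun i hi => (Real.exp_log (hpos i hi)).symm
    have hr : ((m:ℝ) / n) ^ lam = Real.exp (lam * (Real.log m - Real.log n)) := by
      rw [Real.rpow_def_of_pos (div_pos hm0 hn0),
        Real.log_div (ne_of_gt hm0) (ne_of_gt hn0), mul_comm]
    rw [hprod, hr, ← Real.exp_add]
    congr 1
    have htel : ∑ i ∈ Finset.Ico m n, (lam * (Real.log ((i:ℝ) + 1) - Real.log i))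
        = lam * Real.log n - lam * Real.log m := by
      have h := tel_sum (fun i : ℕ => lam * Real.log i) hmn
      rw [← h]
      refine Finset.sum_congr rfl fun i hi => ?_
      push_cast
      ring
    rw [Finset.sum_sub_distrib, htel]
    ring
  · calc |∑ i ∈ Finset.Ico m n,
        (Real.log (1 + lam / (ℓ + i)) - lam * (Real.log ((i:ℝ) + 1) - Real.log i))|
        ≤ ∑ i ∈ Finset.Ico m n,
          |Real.log (1 + lam / (ℓ + i)) - lam * (Real.log ((i:ℝ) + 1) - Real.log i)| :=
        Finset.abs_sum_le_sum_abs _ _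
      _ ≤ ∑ i ∈ Finset.Ico m n, (2 * lam ^ 2 + |lam| * ℓ + 2 * |lam|) / (i:ℝ) ^ 2 := by
        refine Finset.sum_le_sum fun i hi => ?_
        have him : m ≤ i := (Finset.mem_Ico.mp hi).1
        have hmi : (m:ℝ) ≤ i := by exact_mod_cast him
        have hm2' : (2:ℝ) ≤ m := by exact_mod_cast hm2
        exact term_bound lam ℓ hℓ (le_trans hm2' hmi) (le_trans hml hmi)
      _ = (2 * lam ^ 2 + |lam| * ℓ + 2 * |lam|) * ∑ i ∈ Finset.Ico m n, ((i:ℝ) ^ 2)⁻¹ := by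
        rw [Finset.mul_sum]
        exact Finset.sum_congr rfl fun i _ => div_eq_mul_inv _ _
      _ ≤ (2 * lam ^ 2 + |lam| * ℓ + 2 * |lam|) * (2 / m) := by
        refine mul_le_mul_of_nonneg_left (sum_inv_sq_le m n (by omega)) (by positivity)

/-- **Uniform limit of normalized partial products** (Lemma 2, Eq. (34)).  For `λ ∈ ℝ` and
`ℓ > 0`, `lim_{m→∞} sup_{n ≥ m} (m/n)^λ F_m^n(ℓ, λ) = 1`. -/
theorem prodF_normalized_sup_tendsto_one (lam ℓ : ℝ) (hℓ : 0 < ℓ) :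
    Tendsto (fun m : ℕ => ⨆ n : {n : ℕ // m ≤ n},
        ((m : ℝ) / ((n : ℕ) : ℝ)) ^ lam * prodF ℓ lam m (n : ℕ))
      atTop (𝓝 1) := by
  have hC0 : (0:ℝ) ≤ 2 * lam ^ 2 + |lam| * ℓ + 2 * |lam| := by positivity
  have hupper : Tendsto
      (fun m : ℕ => Real.exp ((2 * lam ^ 2 + |lam| * ℓ + 2 * |lam|) * (2 / m)))
      atTop (𝓝 1) := by
    have h1 : Tendsto (fun m : ℕ => (2 * lam ^ 2 + |lam| * ℓ + 2 * |lam|) * (2 / (m:ℝ)))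
        atTop (𝓝 0) := by
      simpa using (tendsto_const_div_atTop_nhds_zero_nat (2:ℝ)).const_mul
        (2 * lam ^ 2 + |lam| * ℓ + 2 * |lam|)
    simpa [Function.comp_def] using (Real.continuous_exp.tendsto 0).comp h1
  have hmain : ∀ᶠ m : ℕ in atTop,
      (1:ℝ) ≤ (⨆ n : {n : ℕ // m ≤ n},
        ((m : ℝ) / ((n : ℕ) : ℝ)) ^ lam * prodF ℓ lam m (n : ℕ)) ∧
      (⨆ n : {n : ℕ // m ≤ n},
        ((m : ℝ) / ((n : ℕ) : ℝ)) ^ lam * prodF ℓ lam m (n : ℕ))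
        ≤ Real.exp ((2 * lam ^ 2 + |lam| * ℓ + 2 * |lam|) * (2 / m)) := by
    filter_upwards [eventually_ge_atTop 2, eventually_ge_atTop ⌈2 * |lam|⌉₊] with m hm2 hml
    haveI : Nonempty {n : ℕ // m ≤ n} := ⟨⟨m, le_rfl⟩⟩
    have hml' : 2 * |lam| ≤ (m:ℝ) := le_trans (Nat.le_ceil _) (by exact_mod_cast hml)
    have hb : ∀ n : {n : ℕ // m ≤ n},
        ((m:ℝ) / ((n:ℕ):ℝ)) ^ lam * prodF ℓ lam m (n:ℕ)
          ≤ Real.exp ((2 * lam ^ 2 + |lam| * ℓ + 2 * |lam|) * (2 / m)) := by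
      intro n
      obtain ⟨s, hs1, hs2⟩ := key_estimate lam ℓ hℓ hm2 hml' n.2
      rw [hs1]
      exact Real.exp_le_exp.mpr (le_trans (le_abs_self s) hs2)
    constructor
    · have hbdd : BddAbove (Set.range fun n : {n : ℕ // m ≤ n} =>
          ((m:ℝ) / ((n:ℕ):ℝ)) ^ lam * prodF ℓ lam m (n:ℕ)) :=
        ⟨Real.exp ((2 * lam ^ 2 + |lam| * ℓ + 2 * |lam|) * (2 / m)), by
          rintro _ ⟨n, rfl⟩; exact hb n⟩
      have hval : ((m:ℝ) / ((m:ℕ):ℝ)) ^ lam * prodF ℓ lam m m = 1 := by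
        have hm0 : ((m:ℕ):ℝ) ≠ 0 := by
          have : 0 < m := by omega
          positivity
        rw [prodF, Finset.Ico_self, Finset.prod_empty, div_self hm0, Real.one_rpow, mul_one]
      calc (1:ℝ) = ((m:ℝ) / ((m:ℕ):ℝ)) ^ lam * prodF ℓ lam m m := hval.symm
        _ ≤ _ := le_ciSup hbdd (⟨m, le_rfl⟩ : {n : ℕ // m ≤ n})
    · exact ciSup_le hb
  refine tendsto_of_tendsto_of_tendsto_of_le_of_le' tendsto_const_nhds hupper ?_ ?_
  · exact hmain.mono fun m h => h.1
  · exact hmain.mono fun m h => h.2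
end
end

section
/- Uniform bound for normalized partial products: for λ ∈ ℝ and ℓ > 0, define F_m^m(ℓ, λ) = 1 and F_m^n(ℓ, λ) = ∏_{i=m}^{n−1} (1 + λ/(ℓ + i)) for integers n > m ≥ 0. Then there exists a positive constant K = K(λ, ℓ) such that |F_m^n(ℓ, λ)| ≤ K (n/m)^{λ} for all integers 1 ≤ m ≤ n. -/
open Filter
open scoped Topology

noncomputable section

private lemma tele_sum (f : ℕ → ℝ) {m n : ℕ} (hmn : m ≤ n) :
    ∑ i ∈ Finset.Ico m n, (f (i+1) - f i) = f n - f m := by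
  rw [Finset.sum_Ico_eq_sub _ hmn, Finset.sum_range_sub, Finset.sum_range_sub]
  ring

private lemma sum_inv_low (ℓ : ℝ) (hℓ : 0 < ℓ) {m n : ℕ} (hmn : m ≤ n) :
    Real.log (ℓ + n) - Real.log (ℓ + m) ≤ ∑ i ∈ Finset.Ico m n, 1 / (ℓ + i) := by
  have := tele_sum (fun i : ℕ => Real.log (ℓ + i)) hmn
  rw [← this]
  apply Finset.sum_le_sum
  intro i _
  have hpi : (0:ℝ) < ℓ + i := by positivity
  have hpi1 : (0:ℝ) < ℓ + (i+1:ℕ) := by positivity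
  have h2 : Real.log (ℓ + (i+1:ℕ)) - Real.log (ℓ + i) = Real.log ((ℓ + (i+1:ℕ)) / (ℓ + i)) := by
    rw [Real.log_div hpi1.ne' hpi.ne']
  rw [h2]
  have h3 := Real.log_le_sub_one_of_pos (x := (ℓ + (i+1:ℕ)) / (ℓ + i)) (by positivity)
  have heq : (ℓ + (i+1:ℕ)) / (ℓ + i) - 1 = 1 / (ℓ + i) := by
    push_cast
    field_simp
    ring
  linarith [heq ▸ h3]

private lemma sum_inv_up (ℓ : ℝ) (hℓ : 0 < ℓ) {m n : ℕ} (hm : 1 ≤ m) (hmn : m ≤ n) :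
    ∑ i ∈ Finset.Ico m n, 1 / (ℓ + i) ≤ Real.log (ℓ + n - 1) - Real.log (ℓ + m - 1) := by
  have := tele_sum (fun i : ℕ => Real.log (ℓ + i - 1)) hmn
  rw [← this]
  apply Finset.sum_le_sum
  intro i hi
  have hi1 : 1 ≤ i := le_trans hm (Finset.mem_Ico.mp hi).1
  have hi1' : (1:ℝ) ≤ i := by exact_mod_cast hi1
  have hpi : (0:ℝ) < ℓ + i - 1 := by linarith
  have heq : (ℓ + ((i+1:ℕ):ℝ) - 1 : ℝ) = ℓ + i := by push_cast; ring
  rw [heq]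
  have hpi' : (0:ℝ) < ℓ + i := by linarith
  have hlog : Real.log (ℓ + i - 1) - Real.log (ℓ + i) = Real.log ((ℓ + i - 1) / (ℓ + i)) := by
    rw [Real.log_div hpi.ne' hpi'.ne']
  have h3 := Real.log_le_sub_one_of_pos (x := (ℓ + i - 1) / (ℓ + i)) (by positivity)
  have heq2 : (ℓ + i - 1) / (ℓ + i) - 1 = -(1 / (ℓ + i)) := by field_simp; ring
  rw [heq2] at h3
  rw [← hlog] at h3
  linarith

private lemma prodF_key (lam ℓ : ℝ) (hℓ : 0 < ℓ) {m n : ℕ} (hm : 1 ≤ m) (hmn : m ≤ n)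
    (hbig : 2 * |lam| ≤ (m:ℝ)) :
    0 < prodF ℓ lam m n ∧
    prodF ℓ lam m n ≤ Real.exp (|lam| * (Real.log (1+ℓ) + |Real.log (min ℓ (1/2))|)) *
      ((n:ℝ)/m) ^ lam := by
  have hm' : (1:ℝ) ≤ m := by exact_mod_cast hm
  have hn' : (1:ℝ) ≤ n := le_trans hm' (by exact_mod_cast hmn)
  -- positivity of factors
  have hfac : ∀ i ∈ Finset.Ico m n, (1/2:ℝ) ≤ 1 + lam / (ℓ + i) := by
    intro i hi
    have him : (m:ℝ) ≤ i := by exact_mod_cast (Finset.mem_Ico.mp hi).1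
    have hpi : (0:ℝ) < ℓ + i := by linarith
    have habs : |lam / (ℓ + i)| ≤ 1/2 := by
      rw [abs_div, abs_of_pos hpi, div_le_iff₀ hpi]
      linarith
    have := neg_abs_le (lam / (ℓ + i))
    linarith [abs_nonneg (lam / (ℓ+i)), this, habs]
  have hfacpos : ∀ i ∈ Finset.Ico m n, (0:ℝ) < 1 + lam / (ℓ + i) := fun i hi =>
    lt_of_lt_of_le (by norm_num) (hfac i hi)
  have hpos : 0 < prodF ℓ lam m n := Finset.prod_pos hfacpos
  refine ⟨hpos, ?_⟩
  set c : ℝ := min ℓ (1/2) with hc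
  have hc0 : 0 < c := lt_min hℓ (by norm_num)
  have hcℓ : c ≤ ℓ := min_le_left _ _
  have hch : c ≤ 1/2 := min_le_right _ _
  set C : ℝ := |lam| * (Real.log (1+ℓ) + |Real.log c|) with hC
  -- log of product
  have hlogprod : Real.log (prodF ℓ lam m n)
      = ∑ i ∈ Finset.Ico m n, Real.log (1 + lam / (ℓ + i)) := by
    rw [prodF]
    exact Real.log_prod (fun i hi => (hfacpos i hi).ne')
  have hterm : ∀ i ∈ Finset.Ico m n,
      Real.log (1 + lam / (ℓ + i)) ≤ lam * (1 / (ℓ + i)) := by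
    intro i hi
    have h3 := Real.log_le_sub_one_of_pos (hfacpos i hi)
    have : lam / (ℓ + i) = lam * (1 / (ℓ + i)) := by ring
    linarith [this ▸ h3]
  set S : ℝ := ∑ i ∈ Finset.Ico m n, 1 / (ℓ + i) with hSdef
  have hS : Real.log (prodF ℓ lam m n) ≤ lam * S := by
    rw [hlogprod, hSdef, Finset.mul_sum]
    exact Finset.sum_le_sum hterm
  have hL1 : (0:ℝ) ≤ Real.log (1+ℓ) := Real.log_nonneg (by linarith)
  -- main estimate on lam * S
  have hmain : lam * S ≤ lam * (Real.log n - Real.log m) + C := by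
    rcases le_or_gt 0 lam with hlam | hlam
    · -- upper bound on S
      have hup := sum_inv_up ℓ hℓ hm hmn
      have h1 : Real.log (ℓ + n - 1) ≤ Real.log (1+ℓ) + Real.log n := by
        rw [← Real.log_mul (by linarith) (by linarith)]
        apply Real.log_le_log (by linarith)
        nlinarith
      have h2 : Real.log c + Real.log m ≤ Real.log (ℓ + m - 1) := by
        rw [← Real.log_mul hc0.ne' (by linarith)]
        apply Real.log_le_log (by positivity)
        nlinarith
      have hSle : S ≤ (Real.log n - Real.log m) + (Real.log (1+ℓ) - Real.log c) := by
        have := hup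
        linarith
      have e1 : lam * S ≤ lam * (Real.log n - Real.log m)
          + lam * (Real.log (1+ℓ) - Real.log c) := by
        rw [← mul_add]
        exact mul_le_mul_of_nonneg_left hSle hlam
      have habs2 : Real.log (1+ℓ) - Real.log c ≤ Real.log (1+ℓ) + |Real.log c| := by
        have := neg_abs_le (Real.log c)
        linarith
      have e2 : lam * (Real.log (1+ℓ) - Real.log c)
          ≤ |lam| * (Real.log (1+ℓ) + |Real.log c|) := by
        rw [abs_of_nonneg hlam]
        exact mul_le_mul_of_nonneg_left habs2 hlam
      linarith
    · -- lower bound on S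
      have hlow := sum_inv_low ℓ hℓ hmn
      have h1 : Real.log n ≤ Real.log (ℓ + n) := Real.log_le_log (by linarith) (by linarith)
      have h2 : Real.log (ℓ + m) ≤ Real.log (1+ℓ) + Real.log m := by
        rw [← Real.log_mul (by linarith) (by linarith)]
        apply Real.log_le_log (by linarith)
        nlinarith
      have hSge : (Real.log n - Real.log m) - Real.log (1+ℓ) ≤ S := by linarith
      have e1 : lam * S ≤ lam * (Real.log n - Real.log m) + (-lam) * Real.log (1+ℓ) := by
        have h0 := mul_le_mul_of_nonpos_left hSge hlam.le
        have h0' : lam * ((Real.log n - Real.log m) - Real.log (1+ℓ))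
            = lam * (Real.log n - Real.log m) + (-lam) * Real.log (1+ℓ) := by ring
        linarith [h0' ▸ h0]
      have e2 : (-lam) * Real.log (1+ℓ) ≤ |lam| * (Real.log (1+ℓ) + |Real.log c|) := by
        rw [← abs_of_neg hlam]
        exact mul_le_mul_of_nonneg_left (by linarith [abs_nonneg (Real.log c)]) (abs_nonneg lam)
      linarith
  -- conclude
  have hnm : (0:ℝ) < (n:ℝ)/m := by positivity
  have hrpow : ((n:ℝ)/m) ^ lam = Real.exp (lam * (Real.log n - Real.log m)) := by
    rw [Real.rpow_def_of_pos hnm, Real.log_div (by linarith) (by linarith)]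
    ring_nf
  calc prodF ℓ lam m n = Real.exp (Real.log (prodF ℓ lam m n)) := (Real.exp_log hpos).symm
    _ ≤ Real.exp (lam * (Real.log n - Real.log m) + C) := Real.exp_le_exp.mpr (by linarith)
    _ = Real.exp C * ((n:ℝ)/m) ^ lam := by rw [Real.exp_add, hrpow]; ring

private lemma rpow_close (lam : ℝ) {x y d : ℝ} (hx : 0 < x) (hy : 0 < y)
    (h : |Real.log x - Real.log y| ≤ d) :
    x ^ lam ≤ Real.exp (|lam| * d) * y ^ lam := by
  rw [Real.rpow_def_of_pos hx, Real.rpow_def_of_pos hy, ← Real.exp_add, Real.exp_le_exp]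
  have h2 : lam * (Real.log x - Real.log y) ≤ |lam| * d := by
    calc lam * (Real.log x - Real.log y) ≤ |lam * (Real.log x - Real.log y)| := le_abs_self _
    _ = |lam| * |Real.log x - Real.log y| := abs_mul _ _
    _ ≤ |lam| * d := mul_le_mul_of_nonneg_left h (abs_nonneg _)
  nlinarith [h2]

private lemma abs_prodF_le (lam ℓ : ℝ) (hℓ : 0 < ℓ) {m p N : ℕ} (h : p ≤ N) :
    |prodF ℓ lam m p| ≤ (1 + |lam|/ℓ) ^ N := by
  rw [prodF, Finset.abs_prod]
  have hb : (1:ℝ) ≤ 1 + |lam|/ℓ := le_add_of_nonneg_right (by positivity)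
  calc ∏ i ∈ Finset.Ico m p, |1 + lam/(ℓ+i)|
      ≤ ∏ _i ∈ Finset.Ico m p, (1 + |lam|/ℓ) := by
        apply Finset.prod_le_prod (fun i _ => abs_nonneg _)
        intro i _
        have hpi : (0:ℝ) < ℓ + i := by positivity
        calc |1 + lam/(ℓ+i)| ≤ |(1:ℝ)| + |lam/(ℓ+i)| := abs_add_le _ _
        _ = 1 + |lam|/(ℓ+i) := by rw [abs_one, abs_div, abs_of_pos hpi]
        _ ≤ 1 + |lam|/ℓ := by
            gcongr
            · linarith [Nat.cast_nonneg (α := ℝ) i]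
    _ = (1 + |lam|/ℓ) ^ (p - m) := by rw [Finset.prod_const, Nat.card_Ico]
    _ ≤ (1 + |lam|/ℓ) ^ N := pow_le_pow_right₀ hb (by omega)

/-- **Uniform bound for normalized partial products** (Lemma 2, Eq. (35)).  For `λ ∈ ℝ` and
`ℓ > 0` there is a positive constant `K = K(λ, ℓ)` such that
`|F_m^n(ℓ, λ)| ≤ K (n/m)^λ` for all integers `1 ≤ m ≤ n`. -/
theorem prodF_uniform_bound (lam ℓ : ℝ) (hℓ : 0 < ℓ) :
    ∃ K : ℝ, 0 < K ∧ ∀ m n : ℕ, 1 ≤ m → m ≤ n →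
      |prodF ℓ lam m n| ≤ K * ((n : ℝ) / (m : ℝ)) ^ lam := by
  set N : ℕ := ⌈2*|lam|⌉₊ + 1 with hNdef
  have hN1 : 1 ≤ N := Nat.le_add_left 1 _
  have hN1' : (1:ℝ) ≤ N := by exact_mod_cast hN1
  have hNbig : 2*|lam| ≤ (N:ℝ) := by
    refine le_trans (Nat.le_ceil _) ?_
    exact_mod_cast Nat.le_succ _
  set C : ℝ := |lam| * (Real.log (1+ℓ) + |Real.log (min ℓ (1/2))|) with hCdef
  have hC0 : 0 ≤ C := by
    apply mul_nonneg (abs_nonneg _)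
    have := Real.log_nonneg (show (1:ℝ) ≤ 1+ℓ by linarith)
    have := abs_nonneg (Real.log (min ℓ (1/2)))
    linarith
  set A : ℝ := (1 + |lam|/ℓ) ^ N with hAdef
  have hA1 : (1:ℝ) ≤ A := one_le_pow₀ (le_add_of_nonneg_right (by positivity))
  set B : ℝ := Real.exp (|lam| * Real.log N) with hBdef
  have hB1 : (1:ℝ) ≤ B := Real.one_le_exp (mul_nonneg (abs_nonneg _)
    (Real.log_nonneg hN1'))
  have hEC : (1:ℝ) ≤ Real.exp C := Real.one_le_exp hC0
  refine ⟨Real.exp C * A * B, by positivity, ?_⟩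
  intro m n hm hmn
  have hm' : (1:ℝ) ≤ m := by exact_mod_cast hm
  have hmn' : (m:ℝ) ≤ n := by exact_mod_cast hmn
  have hn' : (1:ℝ) ≤ n := le_trans hm' hmn'
  have hratio : (1:ℝ) ≤ (n:ℝ)/m := (one_le_div (by linarith)).mpr hmn'
  have hrpos : (0:ℝ) < ((n:ℝ)/m) ^ lam := Real.rpow_pos_of_pos (by linarith) _
  by_cases hNm : N ≤ m
  · have hkey := prodF_key lam ℓ hℓ hm hmn (le_trans hNbig (by exact_mod_cast hNm))
    rw [abs_of_pos hkey.1]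
    calc prodF ℓ lam m n ≤ Real.exp C * ((n:ℝ)/m) ^ lam := hkey.2
    _ ≤ Real.exp C * A * B * ((n:ℝ)/m) ^ lam := by
        apply mul_le_mul_of_nonneg_right _ hrpos.le
        nlinarith [Real.exp_pos C, mul_le_mul_of_nonneg_left hA1 (Real.exp_pos C).le,
          mul_le_mul_of_nonneg_left hB1 (mul_nonneg (Real.exp_pos C).le (by linarith : (0:ℝ) ≤ A))]
  · push_neg at hNm
    by_cases hnN : n ≤ N
    · -- small case
      have hb := abs_prodF_le lam ℓ hℓ (N := N) (m := m) (p := n) hnN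
      have hNm' : ((n:ℝ)/m) ≤ N := by
        have : (n:ℝ)/m ≤ n/1 := by gcongr <;> linarith
        simp at this
        have hnN' : (n:ℝ) ≤ N := by exact_mod_cast hnN
        linarith
      have hlogle : |Real.log 1 - Real.log ((n:ℝ)/m)| ≤ Real.log N := by
        rw [Real.log_one, zero_sub, abs_neg, abs_of_nonneg (Real.log_nonneg hratio)]
        exact Real.log_le_log (by linarith) hNm'
      have h1 : (1:ℝ) ≤ B * ((n:ℝ)/m) ^ lam := by
        have h := rpow_close lam one_pos (show (0:ℝ) < (n:ℝ)/m by linarith) hlogle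
        simpa [Real.one_rpow] using h
      calc |prodF ℓ lam m n| ≤ A := hb
      _ = A * 1 := (mul_one A).symm
      _ ≤ A * (Real.exp C * (B * ((n:ℝ)/m) ^ lam)) := by
          apply mul_le_mul_of_nonneg_left _ (by positivity)
          nlinarith [Real.exp_pos C, h1, mul_le_mul hEC h1 (by norm_num) (Real.exp_pos C).le]
      _ = Real.exp C * A * B * ((n:ℝ)/m) ^ lam := by ring
    · push_neg at hnN
      have hNn : N ≤ n := hnN.le
      have hsplit : prodF ℓ lam m n = prodF ℓ lam m N * prodF ℓ lam N n := by
        rw [prodF, prodF, prodF, Finset.prod_Ico_consecutive _ hNm.le hNn]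
      have hkey := prodF_key lam ℓ hℓ hN1 hNn (by linarith)
      have hb := abs_prodF_le lam ℓ hℓ (N := N) (m := m) (p := N) le_rfl
      have hcmp : ((n:ℝ)/N) ^ lam ≤ B * ((n:ℝ)/m) ^ lam := by
        apply rpow_close lam (by positivity) (by linarith)
        have hmpos : (0:ℝ) < m := by linarith
        have hNpos : (0:ℝ) < N := by linarith
        rw [Real.log_div (by linarith) hNpos.ne', Real.log_div (by linarith) hmpos.ne']
        have h1 : Real.log m ≤ Real.log N :=
          Real.log_le_log hmpos (by exact_mod_cast hNm.le)
        have h2 : 0 ≤ Real.log m := Real.log_nonneg hm'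
        have h3 : Real.log N ≤ Real.log N := le_rfl
        rw [abs_of_nonpos (by linarith)]
        linarith
      calc |prodF ℓ lam m n| = |prodF ℓ lam m N| * prodF ℓ lam N n := by
            rw [hsplit, abs_mul, abs_of_pos hkey.1]
      _ ≤ A * (Real.exp C * ((n:ℝ)/N) ^ lam) := by
            apply mul_le_mul hb (hkey.2) (le_of_lt hkey.1) (by positivity)
      _ ≤ A * (Real.exp C * (B * ((n:ℝ)/m) ^ lam)) := by
            apply mul_le_mul_of_nonneg_left _ (by positivity)
            exact mul_le_mul_of_nonneg_left hcmp (Real.exp_pos C).le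
      _ = Real.exp C * A * B * ((n:ℝ)/m) ^ lam := by ring
end
end

section
/- Convergence of the normalized mean: in an extended Pólya urn satisfying (A1)–(A4), with Y_n := C_n U, B_{n,0} := diag(b_{n,0}(1),…,b_{n,0}(d)) and b_{n,0}(j) := ∏_{ℓ=0}^{n−1}(1 + λ_j/t_ℓ), one has E[Y_n] = Y_0 B_{n,0} for all n, and consequently n^{-1} E[Y_n] → s e_1 as n → ∞, where e_1 is the first canonical row vector; moreover n^{-1/2}(E[Y_n] − n s e_1) → 0. -/
open MeasureTheory ProbabilityTheory Filter Matrix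
open scoped Topology NNReal

noncomputable section

private lemma bCoef_succ (s t0 l : ℝ) (n : ℕ) :
    bCoef s t0 l (n+1) 0 = bCoef s t0 l n 0 * (1 + l / (t0 + n * s)) := by
  simpa [bCoef] using Finset.prod_Ico_succ_top (Nat.zero_le n)
    (fun ℓ : ℕ => (1 + l / (t0 + ℓ * s)))

private lemma bCoef_principal (s t0 : ℝ) (hs : 0 < s) (ht : 0 < t0) (n : ℕ) :
    bCoef s t0 s n 0 * t0 = t0 + n * s := by
  induction n with
  | zero => simp [bCoef]
  | succ n ih =>
    have htn : (0:ℝ) < t0 + n*s := by positivity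
    rw [bCoef_succ]
    have h : bCoef s t0 s n 0 * (1 + s/(t0+n*s)) * t0
        = (bCoef s t0 s n 0 * t0) * (1 + s/(t0+n*s)) := by ring
    rw [h, ih]
    push_cast
    field_simp
    ring

private lemma sum_inv_t_le (s t0 : ℝ) (hs : 0 < s) (ht : 0 < t0) (n : ℕ) :
    ∑ ℓ ∈ Finset.range n, 1/(t0 + ℓ*s)
      ≤ 1/t0 + (Real.log (t0 + n*s) - Real.log t0)/s := by
  have htℓ : ∀ m : ℕ, (0:ℝ) < t0 + m*s := fun m => by positivity
  have key : ∀ m : ℕ, ∑ ℓ ∈ Finset.range (m+1), 1/(t0+ℓ*s)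
      ≤ 1/t0 + (Real.log (t0+m*s) - Real.log t0)/s := by
    intro m
    induction m with
    | zero => simp
    | succ m ih =>
      rw [Finset.sum_range_succ]
      have hstep : 1/(t0+((m+1:ℕ):ℝ)*s)
          ≤ (Real.log (t0+((m+1:ℕ):ℝ)*s) - Real.log (t0+(m:ℝ)*s))/s := by
        have h1 : Real.log ((t0+(m:ℝ)*s)/(t0+((m+1:ℕ):ℝ)*s))
            ≤ (t0+(m:ℝ)*s)/(t0+((m+1:ℕ):ℝ)*s) - 1 :=
          Real.log_le_sub_one_of_pos (by positivity)
        rw [Real.log_div (ne_of_gt (htℓ m)) (ne_of_gt (htℓ (m+1)))] at h1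
        have h2 : (t0+(m:ℝ)*s)/(t0+((m+1:ℕ):ℝ)*s) - 1
            = -(s/(t0+((m+1:ℕ):ℝ)*s)) := by
          have hne := ne_of_gt (htℓ (m+1))
          field_simp
          push_cast
          ring
        rw [h2] at h1
        rw [le_div_iff₀ hs]
        have h3 : 1/(t0+((m+1:ℕ):ℝ)*s)*s = s/(t0+((m+1:ℕ):ℝ)*s) := by ring
        rw [h3]
        linarith
      calc ∑ ℓ ∈ Finset.range (m+1), 1/(t0+ℓ*s) + 1/(t0+((m+1:ℕ):ℝ)*s)
          ≤ (1/t0 + (Real.log (t0+(m:ℝ)*s) - Real.log t0)/s)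
            + (Real.log (t0+((m+1:ℕ):ℝ)*s) - Real.log (t0+(m:ℝ)*s))/s :=
            add_le_add ih hstep
        _ = 1/t0 + (Real.log (t0+((m+1:ℕ):ℝ)*s) - Real.log t0)/s := by ring
  cases n with
  | zero =>
    simp only [Finset.range_zero, Finset.sum_empty, Nat.cast_zero, zero_mul, add_zero,
      sub_self, zero_div, add_zero]
    positivity
  | succ m =>
    refine (key m).trans ?_
    have hle : t0 + (m:ℝ)*s ≤ t0 + ((m+1:ℕ):ℝ)*s := by push_cast; nlinarith
    have hlog := Real.log_le_log (htℓ m) hle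
    have h4 : (Real.log (t0+(m:ℝ)*s) - Real.log t0)/s
        ≤ (Real.log (t0+((m+1:ℕ):ℝ)*s) - Real.log t0)/s := by gcongr
    linarith

private lemma bCoef_nonneg (s t0 l : ℝ) (hs : 0 < s) (ht : 0 < t0) (hl : 0 ≤ l) (n : ℕ) :
    0 ≤ bCoef s t0 l n 0 :=
  Finset.prod_nonneg fun ℓ _ => by positivity

private lemma bCoef_le (s t0 l : ℝ) (hs : 0 < s) (ht : 0 < t0) (hl : 0 ≤ l) (n : ℕ) :
    bCoef s t0 l n 0
      ≤ Real.exp (l/t0 - l/s * Real.log t0) * (t0 + n*s) ^ (l/s : ℝ) := by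
  have htn : (0:ℝ) < t0 + n*s := by positivity
  have h1 : bCoef s t0 l n 0
      ≤ Real.exp (l * ∑ ℓ ∈ Finset.range n, 1/(t0+ℓ*s)) := by
    rw [bCoef, ← Finset.range_eq_Ico]
    calc ∏ ℓ ∈ Finset.range n, (1 + l/(t0+ℓ*s))
        ≤ ∏ ℓ ∈ Finset.range n, Real.exp (l/(t0+ℓ*s)) := by
          apply Finset.prod_le_prod
          · intro ℓ _; positivity
          · intro ℓ _; linarith [Real.add_one_le_exp (l/(t0+ℓ*s))]
      _ = Real.exp (∑ ℓ ∈ Finset.range n, l/(t0+ℓ*s)) := (Real.exp_sum _ _).symm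
      _ = Real.exp (l * ∑ ℓ ∈ Finset.range n, 1/(t0+ℓ*s)) := by
          rw [Finset.mul_sum]
          simp_rw [mul_one_div]
  refine h1.trans ?_
  have h2 : l * ∑ ℓ ∈ Finset.range n, 1/(t0+ℓ*s)
      ≤ l * (1/t0 + (Real.log (t0+n*s) - Real.log t0)/s) :=
    mul_le_mul_of_nonneg_left (sum_inv_t_le s t0 hs ht n) hl
  refine (Real.exp_le_exp.2 h2).trans_eq ?_
  rw [Real.rpow_def_of_pos htn, ← Real.exp_add]
  congr 1
  field_simp
  ring

private lemma natSqrt_tendsto : Tendsto (fun n : ℕ => Real.sqrt n) atTop atTop := by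
  have h := (tendsto_rpow_atTop (by norm_num : (0:ℝ) < 1/2)).comp
    (tendsto_natCast_atTop_atTop (R := ℝ))
  exact h.congr fun n => (Real.sqrt_eq_rpow _).symm

private lemma const_div_sqrt (c : ℝ) :
    Tendsto (fun n : ℕ => c / Real.sqrt n) atTop (𝓝 0) := by
  have h := (natSqrt_tendsto.inv_tendsto_atTop).const_mul c
  rw [mul_zero] at h
  refine h.congr fun n => ?_
  simp [div_eq_mul_inv]

private lemma rpow_div_sqrt (a : ℝ) (h0 : 0 ≤ a) (ha : a < 1/2) :
    Tendsto (fun n : ℕ => (n:ℝ) ^ (a : ℝ) / Real.sqrt n) atTop (𝓝 0) := by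
  have h := (tendsto_rpow_neg_atTop (by linarith : (0:ℝ) < 1/2 - a)).comp
    (tendsto_natCast_atTop_atTop (R := ℝ))
  apply h.congr'
  filter_upwards [eventually_ge_atTop 1] with n hn
  have hn0 : (0:ℝ) < n := by exact_mod_cast hn
  show (n:ℝ) ^ (-(1/2 - a)) = (n:ℝ) ^ (a:ℝ) / Real.sqrt n
  rw [Real.sqrt_eq_rpow, neg_sub, Real.rpow_sub hn0]

private lemma bCoef_div_sqrt_tendsto (s t0 l : ℝ) (hs : 0 < s) (ht : 0 < t0)
    (hl : 2*l < s) (c : ℝ) :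
    Tendsto (fun n : ℕ => bCoef s t0 l n 0 * c / Real.sqrt n) atTop (𝓝 0) := by
  rcases le_or_gt l 0 with hneg | hpos
  · obtain ⟨N, hN⟩ := exists_nat_ge ((-l)/s)
    have hbound : ∀ n, N ≤ n → |bCoef s t0 l n 0| ≤ |bCoef s t0 l N 0| := by
      intro n hn
      have hsplit : bCoef s t0 l N 0 * (∏ ℓ ∈ Finset.Ico N n, (1 + l/(t0+ℓ*s)))
          = bCoef s t0 l n 0 :=
        Finset.prod_Ico_consecutive _ (Nat.zero_le N) hn
      rw [← hsplit, abs_mul]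
      have hp1 : |∏ ℓ ∈ Finset.Ico N n, (1 + l/(t0+ℓ*s))| ≤ 1 := by
        rw [Finset.abs_prod]
        apply Finset.prod_le_one (fun ℓ _ => abs_nonneg _)
        intro ℓ hℓ
        have hℓN : (N:ℝ) ≤ ℓ := by exact_mod_cast (Finset.mem_Ico.1 hℓ).1
        have htℓ : (0:ℝ) < t0 + ℓ*s := by positivity
        have hge : -l ≤ t0 + ℓ*s := by
          have h5 : -l ≤ (N:ℝ)*s := by
            rw [div_le_iff₀ hs] at hN; linarith
          nlinarith [mul_le_mul_of_nonneg_right hℓN hs.le]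
        have hx1 : (-1:ℝ) ≤ l/(t0+ℓ*s) := by rw [le_div_iff₀ htℓ]; linarith
        have hx2 : l/(t0+ℓ*s) ≤ 0 := div_nonpos_of_nonpos_of_nonneg hneg htℓ.le
        rw [abs_le]
        constructor <;> linarith
      calc |bCoef s t0 l N 0| * |∏ ℓ ∈ Finset.Ico N n, (1 + l/(t0+ℓ*s))|
          ≤ |bCoef s t0 l N 0| * 1 := mul_le_mul_of_nonneg_left hp1 (abs_nonneg _)
        _ = |bCoef s t0 l N 0| := mul_one _
    apply squeeze_zero_norm' (a := fun n : ℕ => |bCoef s t0 l N 0| * |c| / Real.sqrt n)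
    · filter_upwards [eventually_ge_atTop N, eventually_ge_atTop 1] with n hn hn1
      have hsq : (0:ℝ) < Real.sqrt n := Real.sqrt_pos.2 (by exact_mod_cast hn1)
      have hnorm : ‖bCoef s t0 l n 0 * c / Real.sqrt n‖
          = |bCoef s t0 l n 0| * |c| / Real.sqrt n := by
        rw [Real.norm_eq_abs, abs_div, abs_mul, abs_of_nonneg (Real.sqrt_nonneg _)]
      rw [hnorm]
      exact (div_le_div_iff_of_pos_right hsq).2
        (mul_le_mul_of_nonneg_right (hbound n hn) (abs_nonneg _))
    · exact const_div_sqrt _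
  · have hls : l/s < 1/2 := by rw [div_lt_iff₀ hs]; linarith
    set K := Real.exp (l/t0 - l/s * Real.log t0) * (t0+s) ^ (l/s : ℝ) with hK
    have hKpos : 0 < K := by positivity
    apply squeeze_zero_norm'
      (a := fun n : ℕ => (K*|c|) * ((n:ℝ) ^ (l/s : ℝ) / Real.sqrt n))
    · filter_upwards [eventually_ge_atTop 1] with n hn
      have hn1 : (1:ℝ) ≤ n := by exact_mod_cast hn
      have hn0 : (0:ℝ) < n := by linarith
      have hb0 : 0 ≤ bCoef s t0 l n 0 := bCoef_nonneg s t0 l hs ht hpos.le n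
      have hble : bCoef s t0 l n 0 ≤ K * (n:ℝ) ^ (l/s : ℝ) := by
        refine (bCoef_le s t0 l hs ht hpos.le n).trans ?_
        rw [hK, mul_assoc]
        apply mul_le_mul_of_nonneg_left _ (Real.exp_nonneg _)
        rw [← Real.mul_rpow (by positivity) hn0.le]
        apply Real.rpow_le_rpow (by positivity) _ (by positivity)
        nlinarith
      have hsqp : (0:ℝ) < Real.sqrt n := Real.sqrt_pos.2 hn0
      have hnorm : ‖bCoef s t0 l n 0 * c / Real.sqrt n‖
          = bCoef s t0 l n 0 * |c| / Real.sqrt n := by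
        rw [Real.norm_eq_abs, abs_div, abs_mul, abs_of_nonneg (Real.sqrt_nonneg _),
          abs_of_nonneg hb0]
      have h6 : (K*|c|) * ((n:ℝ) ^ (l/s : ℝ) / Real.sqrt n)
          = (K * (n:ℝ) ^ (l/s : ℝ)) * |c| / Real.sqrt n := by ring
      rw [hnorm, h6]
      exact (div_le_div_iff_of_pos_right hsqp).2
        (mul_le_mul_of_nonneg_right hble (abs_nonneg _))
    · have h7 := (rpow_div_sqrt (l/s) (by positivity) hls).const_mul (K*|c|)
      rw [mul_zero] at h7
      exact h7

private lemma bCoef_div_n_tendsto (s t0 l : ℝ) (hs : 0 < s) (ht : 0 < t0)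
    (hl : 2*l < s) (c : ℝ) :
    Tendsto (fun n : ℕ => bCoef s t0 l n 0 * c / n) atTop (𝓝 0) := by
  have h1 := bCoef_div_sqrt_tendsto s t0 l hs ht hl c
  have h2 : Tendsto (fun n : ℕ => 1/Real.sqrt n) atTop (𝓝 0) := const_div_sqrt 1
  have h3 := h1.mul h2
  rw [mul_zero] at h3
  apply h3.congr'
  filter_upwards [eventually_ge_atTop 1] with n hn
  have hn0 : (0:ℝ) < n := by exact_mod_cast hn
  have hsq : Real.sqrt n * Real.sqrt n = (n:ℝ) := Real.mul_self_sqrt hn0.le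
  rw [div_mul_div_comm, mul_one, hsq]

/-- **Convergence of the normalized mean** (Eqs. (23)–(24)).  With `Y n = C n * U`, one has
`E[Y n] = Y 0 * B_{n,0}` coordinatewise, hence `n⁻¹ E[Y n] → s e₁` and
`n^{-1/2} (E[Y n] − n s e₁) → 0` as `n → ∞`, where `e₁` is the first canonical row
vector. -/
theorem urn_mean_convergence {d : ℕ} [NeZero d] (hd : 2 ≤ d)
    {Ω : Type*} [mΩ : MeasurableSpace Ω] (μ : Measure Ω) [IsProbabilityMeasure μ]
    (F : Filtration ℕ mΩ) (R : Matrix (Fin d) (Fin d) ℝ)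
    (urn : UrnProcess d μ F R) (spec : UrnSpectral d R) :
    (∀ (n : ℕ) (j : Fin d),
        ∫ ω, Matrix.vecMul (urn.C n ω) spec.U j ∂μ
          = bCoef (spec.lam 0) (∑ i, urn.C0 i) (spec.lam j) n 0
              * Matrix.vecMul urn.C0 spec.U j)
    ∧ Tendsto (fun n : ℕ => fun j : Fin d =>
          (∫ ω, Matrix.vecMul (urn.C n ω) spec.U j ∂μ) / n)
        atTop (𝓝 (fun j : Fin d => if j = 0 then spec.lam 0 else 0))
    ∧ Tendsto (fun n : ℕ => fun j : Fin d =>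
          ((∫ ω, Matrix.vecMul (urn.C n ω) spec.U j ∂μ)
              - n * spec.lam 0 * (if j = 0 then 1 else 0)) / Real.sqrt n)
        atTop (𝓝 0) := by
  set s : ℝ := spec.lam 0 with hs_def
  set t0 : ℝ := ∑ i, urn.C0 i with ht0_def
  have hs : 0 < s := spec.s_pos
  have ht0 : 0 < t0 := urn.t0_pos
  -- row sums of R all equal s
  have hrow : ∀ k, ∑ i, R k i = s := by
    intro k
    have h := congrFun (congrFun spec.diag k) 0
    rw [Matrix.mul_apply, Matrix.mul_diagonal, spec.U_col_one, one_mul] at h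
    simpa [spec.U_col_one] using h
  -- the total mass is deterministic
  have htot : ∀ n ω, ∑ i, urn.C n ω i = t0 + n * s := by
    intro n
    induction n with
    | zero => intro ω; simp [urn.C0_det ω, ht0_def]
    | succ n ih =>
      intro ω
      obtain ⟨k, hk⟩ := urn.chi_basis n ω
      have hv : ∀ i, Matrix.vecMul (urn.χ (n+1) ω) R i = R k i := by
        intro i
        rw [hk]
        simp [Matrix.vecMul, dotProduct, Pi.single_apply, ite_mul]
      have hsum : ∑ i, urn.C (n+1) ω i = ∑ i, (urn.C n ω i + R k i) := by
        refine Finset.sum_congr rfl fun i _ => ?_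
        rw [urn.dynamics n ω]
        simp [hv i]
      rw [hsum, Finset.sum_add_distrib, ih ω, hrow k]
      push_cast
      ring
  -- measurability and integrability
  have hCmeas : ∀ n, StronglyMeasurable (urn.C n) := fun n => ((urn.adapted n).mono (F.le n) le_rfl).stronglyMeasurable
  have hCi : ∀ n i, StronglyMeasurable fun ω => urn.C n ω i := fun n i =>
    (continuous_apply i).comp_stronglyMeasurable (hCmeas n)
  set M : ℝ := ∑ k, ∑ i, |R k i| with hM
  have hRb : ∀ k i, |R k i| ≤ M := by
    intro k i
    calc |R k i| ≤ ∑ i', |R k i'| :=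
          Finset.single_le_sum (f := fun i' => |R k i'|)
            (fun i' _ => abs_nonneg _) (Finset.mem_univ i)
      _ ≤ M :=
          Finset.single_le_sum (f := fun k' => ∑ i', |R k' i'|)
            (fun k' _ => Finset.sum_nonneg fun i' _ => abs_nonneg _) (Finset.mem_univ k)
  have hCb : ∀ n ω i, |urn.C n ω i| ≤ (∑ i', |urn.C0 i'|) + n * M := by
    intro n
    induction n with
    | zero =>
      intro ω i
      rw [urn.C0_det ω]
      simpa using Finset.single_le_sum (f := fun i' => |urn.C0 i'|)
        (fun i' _ => abs_nonneg _) (Finset.mem_univ i)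
    | succ n ih =>
      intro ω i
      obtain ⟨k, hk⟩ := urn.chi_basis n ω
      have hv : Matrix.vecMul (urn.χ (n+1) ω) R i = R k i := by
        rw [hk]
        simp [Matrix.vecMul, dotProduct, Pi.single_apply, ite_mul]
      have h1 : urn.C (n+1) ω i = urn.C n ω i + R k i := by
        rw [urn.dynamics n ω]; simp [hv]
      calc |urn.C (n+1) ω i| ≤ |urn.C n ω i| + |R k i| := by rw [h1]; exact abs_add_le _ _
        _ ≤ ((∑ i', |urn.C0 i'|) + n * M) + M := add_le_add (ih ω i) (hRb k i)
        _ = (∑ i', |urn.C0 i'|) + (n+1 : ℕ) * M := by push_cast; ring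
  have hCint : ∀ n i, Integrable (fun ω => urn.C n ω i) μ := fun n i =>
    (integrable_const ((∑ i', |urn.C0 i'|) + n * M)).mono'
      (hCi n i).aestronglyMeasurable
      (Eventually.of_forall fun ω => by simpa [Real.norm_eq_abs] using hCb n ω i)
  have hYint : ∀ n j, Integrable (fun ω => Matrix.vecMul (urn.C n ω) spec.U j) μ := by
    intro n j
    have h : (fun ω => Matrix.vecMul (urn.C n ω) spec.U j)
        = fun ω => ∑ i, urn.C n ω i * spec.U i j := by
      funext ω; simp [Matrix.vecMul, dotProduct]
    rw [h]
    exact integrable_finset_sum _ fun i _ => (hCint n i).mul_const _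
  -- χ : measurability, boundedness, integrability
  have hχmeas : ∀ n, StronglyMeasurable (urn.χ (n+1)) := fun n =>
    (urn.chi_meas n).mono (F.le (n+1))
  have hχb : ∀ n ω i, ‖urn.χ (n+1) ω i‖ ≤ 1 := by
    intro n ω i
    obtain ⟨k, hk⟩ := urn.chi_basis n ω
    rw [hk, Real.norm_eq_abs, Pi.single_apply]
    split_ifs <;> norm_num
  have hχintg : ∀ n i, Integrable (fun ω => urn.χ (n+1) ω i) μ := fun n i =>
    (integrable_const 1).mono'
      ((continuous_apply i).comp_stronglyMeasurable (hχmeas n)).aestronglyMeasurable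
      (Eventually.of_forall fun ω => hχb n ω i)
  -- integral of χ coordinates
  have hχint : ∀ n i, ∫ ω, urn.χ (n+1) ω i ∂μ
      = (∫ ω, urn.C n ω i ∂μ) / (t0 + n * s) := by
    intro n i
    set A : Set Ω := {ω | urn.χ (n+1) ω = Pi.single i 1} with hA
    have hAmeas : MeasurableSet A :=
      (hχmeas n).measurable (measurableSet_singleton (Pi.single i 1))
    have hind : ∀ ω, urn.χ (n+1) ω i = A.indicator (fun _ => (1:ℝ)) ω := by
      intro ω
      obtain ⟨k, hk⟩ := urn.chi_basis n ω
      by_cases hki : k = i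
      · subst hki
        have hmem : ω ∈ A := hk
        rw [Set.indicator_of_mem hmem, hk, Pi.single_eq_same]
      · have hnot : ω ∉ A := by
          simp only [hA, Set.mem_setOf_eq, hk]
          intro h
          have h2 := congrFun h k
          rw [Pi.single_eq_same, Pi.single_apply] at h2
          rw [if_neg hki] at h2
          norm_num at h2
        rw [Set.indicator_of_notMem hnot, hk, Pi.single_apply, if_neg (Ne.symm hki)]
    calc ∫ ω, urn.χ (n+1) ω i ∂μ
        = ∫ ω, A.indicator (fun _ => (1:ℝ)) ω ∂μ :=
          integral_congr_ae (Eventually.of_forall hind)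
      _ = ∫ ω, (μ[A.indicator (fun _ => (1:ℝ))|F n]) ω ∂μ :=
          (integral_condExp (F.le n)).symm
      _ = ∫ ω, urn.C n ω i / (∑ j', urn.C n ω j') ∂μ :=
          integral_congr_ae (urn.chi_cond n i)
      _ = ∫ ω, urn.C n ω i / (t0 + n * s) ∂μ := by
          refine integral_congr_ae (Eventually.of_forall fun ω => ?_)
          simp only [htot n ω]
      _ = (∫ ω, urn.C n ω i ∂μ) / (t0 + n * s) := integral_div _ _
  -- expansion of the integrals of Y coordinates
  have hYexp : ∀ n j, (∫ ω, Matrix.vecMul (urn.C n ω) spec.U j ∂μ)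
      = ∑ i, (∫ ω, urn.C n ω i ∂μ) * spec.U i j := by
    intro n j
    calc ∫ ω, Matrix.vecMul (urn.C n ω) spec.U j ∂μ
        = ∫ ω, ∑ i, urn.C n ω i * spec.U i j ∂μ := by
          refine integral_congr_ae (Eventually.of_forall fun ω => ?_)
          simp [Matrix.vecMul, dotProduct]
      _ = ∑ i, ∫ ω, urn.C n ω i * spec.U i j ∂μ :=
          integral_finset_sum _ fun i _ => (hCint n i).mul_const _
      _ = ∑ i, (∫ ω, urn.C n ω i ∂μ) * spec.U i j :=
          Finset.sum_congr rfl fun i _ => integral_mul_const _ _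
  have hχexp : ∀ n j, (∫ ω, Matrix.vecMul (urn.χ (n+1) ω) spec.U j ∂μ)
      = (∫ ω, Matrix.vecMul (urn.C n ω) spec.U j ∂μ) / (t0 + n * s) := by
    intro n j
    have htn : (0:ℝ) < t0 + n*s := by positivity
    calc ∫ ω, Matrix.vecMul (urn.χ (n+1) ω) spec.U j ∂μ
        = ∫ ω, ∑ i, urn.χ (n+1) ω i * spec.U i j ∂μ := by
          refine integral_congr_ae (Eventually.of_forall fun ω => ?_)
          simp [Matrix.vecMul, dotProduct]
      _ = ∑ i, ∫ ω, urn.χ (n+1) ω i * spec.U i j ∂μ :=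
          integral_finset_sum _ fun i _ => (hχintg n i).mul_const _
      _ = ∑ i, (∫ ω, urn.χ (n+1) ω i ∂μ) * spec.U i j :=
          Finset.sum_congr rfl fun i _ => integral_mul_const _ _
      _ = ∑ i, ((∫ ω, urn.C n ω i ∂μ) / (t0 + n * s)) * spec.U i j :=
          Finset.sum_congr rfl fun i _ => by rw [hχint n i]
      _ = (∑ i, (∫ ω, urn.C n ω i ∂μ) * spec.U i j) / (t0 + n * s) := by
          rw [Finset.sum_div]
          exact Finset.sum_congr rfl fun i _ => by ring
      _ = (∫ ω, Matrix.vecMul (urn.C n ω) spec.U j ∂μ) / (t0 + n * s) := by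
          rw [hYexp n j]
  -- the recursion for the mean
  have key : ∀ n j, (∫ ω, Matrix.vecMul (urn.C (n+1) ω) spec.U j ∂μ)
      = (1 + spec.lam j / (t0 + n * s))
        * ∫ ω, Matrix.vecMul (urn.C n ω) spec.U j ∂μ := by
    intro n j
    have htn : (0:ℝ) < t0 + n*s := by positivity
    have hsplit : ∀ ω, Matrix.vecMul (urn.C (n+1) ω) spec.U j
        = Matrix.vecMul (urn.C n ω) spec.U j
          + Matrix.vecMul (urn.χ (n+1) ω) spec.U j * spec.lam j := by
      intro ω
      rw [urn.dynamics n ω, Matrix.add_vecMul]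
      have h1 : Matrix.vecMul (Matrix.vecMul (urn.χ (n+1) ω) R) spec.U
          = Matrix.vecMul (Matrix.vecMul (urn.χ (n+1) ω) spec.U)
              (Matrix.diagonal spec.lam) := by
        rw [Matrix.vecMul_vecMul, Matrix.vecMul_vecMul, spec.diag]
      rw [Pi.add_apply, h1, Matrix.vecMul_diagonal]
    have hχUint : Integrable (fun ω => Matrix.vecMul (urn.χ (n+1) ω) spec.U j) μ := by
      have h : (fun ω => Matrix.vecMul (urn.χ (n+1) ω) spec.U j)
          = fun ω => ∑ i, urn.χ (n+1) ω i * spec.U i j := by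
        funext ω; simp [Matrix.vecMul, dotProduct]
      rw [h]
      exact integrable_finset_sum _ fun i _ => (hχintg n i).mul_const _
    calc (∫ ω, Matrix.vecMul (urn.C (n+1) ω) spec.U j ∂μ)
        = ∫ ω, (Matrix.vecMul (urn.C n ω) spec.U j
            + Matrix.vecMul (urn.χ (n+1) ω) spec.U j * spec.lam j) ∂μ :=
          integral_congr_ae (Eventually.of_forall fun ω => hsplit ω)
      _ = (∫ ω, Matrix.vecMul (urn.C n ω) spec.U j ∂μ)
            + (∫ ω, Matrix.vecMul (urn.χ (n+1) ω) spec.U j ∂μ) * spec.lam j := by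
          rw [integral_add (hYint n j) (hχUint.mul_const _), integral_mul_const]
      _ = (1 + spec.lam j / (t0 + n * s))
            * ∫ ω, Matrix.vecMul (urn.C n ω) spec.U j ∂μ := by
          rw [hχexp n j]
          field_simp
  -- part 1
  have part1 : ∀ (n : ℕ) (j : Fin d),
      ∫ ω, Matrix.vecMul (urn.C n ω) spec.U j ∂μ
        = bCoef s t0 (spec.lam j) n 0 * Matrix.vecMul urn.C0 spec.U j := by
    intro n j
    induction n with
    | zero =>
      have h : (fun ω => Matrix.vecMul (urn.C 0 ω) spec.U j)
          = fun _ => Matrix.vecMul urn.C0 spec.U j :=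
        funext fun ω => by rw [urn.C0_det ω]
      rw [h, integral_const]
      simp [bCoef]
    | succ n ih =>
      rw [key n j, ih, bCoef_succ]
      ring
  -- value at coordinate 0
  have hc0 : Matrix.vecMul urn.C0 spec.U 0 = t0 := by
    simp [Matrix.vecMul, dotProduct, spec.U_col_one, ht0_def]
  have hval0 : ∀ n : ℕ, (∫ ω, Matrix.vecMul (urn.C n ω) spec.U 0 ∂μ) = t0 + n * s := by
    intro n
    rw [part1 n 0, hc0, bCoef_principal s t0 hs ht0 n]
  refine ⟨part1, ?_, ?_⟩
  · rw [tendsto_pi_nhds]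
    intro j
    by_cases hj : j = 0
    · subst hj
      simp only [if_pos rfl]
      have h1 : Tendsto (fun n : ℕ => t0 * (1/(n:ℝ)) + s) atTop (𝓝 (t0 * 0 + s)) :=
        (tendsto_one_div_atTop_nhds_zero_nat.const_mul t0).add_const s
      rw [mul_zero, zero_add] at h1
      have h2 : Tendsto (fun n : ℕ => (t0 + n * s)/n) atTop (𝓝 s) := by
        apply h1.congr'
        filter_upwards [eventually_ge_atTop 1] with n hn
        have hn0 : (n:ℝ) ≠ 0 := by
          have : (1:ℝ) ≤ n := by exact_mod_cast hn
          linarith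
        field_simp
      exact h2.congr fun n => by rw [hval0 n]
    · simp only [if_neg hj]
      have h2l : 2 * spec.lam j < s := spec.small j hj
      have h := bCoef_div_n_tendsto s t0 (spec.lam j) hs ht0 h2l
        (Matrix.vecMul urn.C0 spec.U j)
      exact h.congr fun n => by rw [part1 n j]
  · rw [tendsto_pi_nhds]
    intro j
    simp only [Pi.zero_apply]
    by_cases hj : j = 0
    · subst hj
      simp only [if_pos rfl, mul_one]
      have h := const_div_sqrt t0
      apply h.congr
      intro n
      rw [hval0 n]
      congr 1
      simp
    · simp only [if_neg hj, mul_zero, sub_zero]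
      have h2l : 2 * spec.lam j < s := spec.small j hj
      have h := bCoef_div_sqrt_tendsto s t0 (spec.lam j) hs ht0 h2l
        (Matrix.vecMul urn.C0 spec.U j)
      exact h.congr fun n => by rw [part1 n j]
end
end
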